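/- arXiv:1710.06399 — 4 statements merged into one kernel-verified Lean document; each statement's English description precedes it below -/
import Mathlib

section
/- Let n ≥ 3 be an integer and let m > 1, ν > 1, K₁, K₂ > 0 with K₁ ≤ K₂. Let ρ : ℝⁿ → (0,∞) be a measurable function satisfying K₁·|x|^{−2}·(log|x|)^{−ν} ≤ ρ(x) ≤ K₂·|x|^{−2}·(log|x|)^{−ν} for all |x| ≥ 2. Then there exist constants C₂ > 0, γ₂ > 0, R₀ > 2 and t₀ > e such that the function ū(x,t) := C₂·(t+t₀)^{−1/(m−1)}·[(log|x|)^{−(ν−1)} − γ₂·(log(t+t₀))^{−(ν−1)}]₊^{1/(m−1)} satisfies ρ(x)·∂_t ū(x,t) ≥ Δ_x(ū^m)(x,t) at every point (x,t) with |x| > R₀, t > 0 and (log|x|)^{−(ν−1)} > γ₂·(log(t+t₀))^{−(ν−1)}. -/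
open Real Filter Set MeasureTheory

/-- The Euclidean Laplacian of a scalar function, as the sum of second directional
derivatives along the standard orthonormal basis of `ℝⁿ`. -/
noncomputable def euclideanLaplacian (n : ℕ) (φ : EuclideanSpace ℝ (Fin n) → ℝ)
    (x : EuclideanSpace ℝ (Fin n)) : ℝ :=
  ∑ i : Fin n, fderiv ℝ (fun y => fderiv ℝ φ y (EuclideanSpace.single i 1)) x
    (EuclideanSpace.single i 1)

set_option maxHeartbeats 2000000

lemma lap_radial (n : ℕ) (φ : EuclideanSpace ℝ (Fin n) → ℝ) (g g1 : ℝ → ℝ) (d2 : ℝ)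
    (x : EuclideanSpace ℝ (Fin n))
    (hφ : ∀ᶠ y in nhds x, φ y = g (‖y‖^2))
    (hg1 : ∀ᶠ q in nhds (‖x‖^2), HasDerivAt g (g1 q) q)
    (hg2 : HasDerivAt g1 d2 (‖x‖^2)) :
    euclideanLaplacian n φ x = 4*‖x‖^2*d2 + 2*n*(g1 (‖x‖^2)) := by
  classical
  set N : EuclideanSpace ℝ (Fin n) → ℝ := fun y => inner ℝ y y with hN
  have hNval : ∀ y : EuclideanSpace ℝ (Fin n), N y = ‖y‖^2 := fun y =>
    real_inner_self_eq_norm_sq y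
  -- derivative of N
  have hNf : ∀ y : EuclideanSpace ℝ (Fin n),
      HasFDerivAt N ((fderivInnerCLM ℝ (y, y)).comp
        ((ContinuousLinearMap.id ℝ _).prod (ContinuousLinearMap.id ℝ _))) y := by
    intro y
    exact (hasFDerivAt_id y).inner ℝ (hasFDerivAt_id y)
  have hDNapp : ∀ (y v : EuclideanSpace ℝ (Fin n)),
      ((fderivInnerCLM ℝ (y, y)).comp
        ((ContinuousLinearMap.id ℝ _).prod (ContinuousLinearMap.id ℝ _))) v
        = 2 * (inner ℝ y v : ℝ) := by
    intro y v
    simp [fderivInnerCLM_apply, real_inner_comm v y]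
    ring
  have hNcont : ContinuousAt N x := (hNf x).continuousAt
  -- eventually, fderiv of φ is the nice formula
  have hev1 : ∀ᶠ y in nhds x, HasDerivAt g (g1 (N y)) (N y) := by
    have : Filter.Tendsto N (nhds x) (nhds (‖x‖^2)) := by
      rw [← hNval x]; exact hNcont
    exact this.eventually hg1
  have hφev : ∀ᶠ y in nhds x, ∀ᶠ z in nhds y, φ z = g (‖z‖^2) :=
    eventually_eventually_nhds.2 hφ
  have hkey : ∀ᶠ y in nhds x, ∀ i : Fin n,
      fderiv ℝ φ y (EuclideanSpace.single i 1) = g1 (N y) * (2 * y i) := by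
    filter_upwards [hev1, hφev] with y hd hloc
    have hcomp : HasFDerivAt (g ∘ N) (g1 (N y) • ((fderivInnerCLM ℝ (y, y)).comp
        ((ContinuousLinearMap.id ℝ _).prod (ContinuousLinearMap.id ℝ _)))) y :=
      hd.comp_hasFDerivAt y (hNf y)
    have hφd : HasFDerivAt φ (g1 (N y) • ((fderivInnerCLM ℝ (y, y)).comp
        ((ContinuousLinearMap.id ℝ _).prod (ContinuousLinearMap.id ℝ _)))) y := by
      apply hcomp.congr_of_eventuallyEq
      filter_upwards [hloc] with z hz
      simp [Function.comp, hNval z, hz]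
    intro i
    rw [hφd.fderiv]
    simp only [ContinuousLinearMap.coe_smul', Pi.smul_apply, smul_eq_mul]
    rw [hDNapp]
    congr 1
    congr 1
    rw [EuclideanSpace.inner_single_right]
    simp
  -- now the second derivative
  have hterm : ∀ i : Fin n,
      fderiv ℝ (fun y => fderiv ℝ φ y (EuclideanSpace.single i 1)) x
        (EuclideanSpace.single i 1) = d2 * (2 * x i) * (2 * x i) + g1 (N x) * 2 := by
    intro i
    set vi : EuclideanSpace ℝ (Fin n) := EuclideanSpace.single i 1 with hvi
    have heq : (fun y => fderiv ℝ φ y vi) =ᶠ[nhds x]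
        (fun y => g1 (N y) * (2 * (inner ℝ y vi : ℝ))) := by
      filter_upwards [hkey] with y hy
      rw [hy i]
      congr 2
      rw [EuclideanSpace.inner_single_right]; simp
    rw [heq.fderiv_eq]
    -- derivative of the nice function
    have hA : HasFDerivAt (fun y => g1 (N y)) (d2 • ((fderivInnerCLM ℝ (x, x)).comp
        ((ContinuousLinearMap.id ℝ _).prod (ContinuousLinearMap.id ℝ _)))) x := by
      have := hg2
      rw [← hNval x] at this
      exact this.comp_hasFDerivAt x (hNf x)
    have hB : HasFDerivAt (fun y : EuclideanSpace ℝ (Fin n) => 2 * (inner ℝ y vi : ℝ))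
        ((2:ℝ) • (innerSL ℝ vi : EuclideanSpace ℝ (Fin n) →L[ℝ] ℝ)) x := by
      have : HasFDerivAt (fun y : EuclideanSpace ℝ (Fin n) => (inner ℝ y vi : ℝ))
          (innerSL ℝ vi : EuclideanSpace ℝ (Fin n) →L[ℝ] ℝ) x := by
        have h := (innerSL ℝ (E := EuclideanSpace ℝ (Fin n)) vi).hasFDerivAt (x := x)
        apply h.congr_of_eventuallyEq
        filter_upwards with z
        rw [innerSL_apply_apply]
        exact real_inner_comm _ _
      simpa using this.const_mul (2:ℝ)
    have hmul : HasFDerivAt (fun y => g1 (N y) * (2 * (inner ℝ y vi : ℝ))) _ x := hA.mul hB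
    rw [hmul.fderiv]
    simp only [ContinuousLinearMap.add_apply, ContinuousLinearMap.coe_smul',
      Pi.smul_apply, smul_eq_mul]
    rw [hDNapp]
    have h1 : (inner ℝ x vi : ℝ) = x i := by
      rw [EuclideanSpace.inner_single_right]; simp
    have h2 : ((innerSL ℝ vi) vi : ℝ) = 1 := by
      rw [innerSL_apply_apply, hvi]
      rw [EuclideanSpace.inner_single_right]
      simp [EuclideanSpace.single_apply]
    rw [h1, h2]
    ring
  have hsum : ∑ i : Fin n, (x i)^2 = ‖x‖^2 := by
    rw [← hNval x]
    show _ = (inner ℝ x x : ℝ)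
    rw [PiLp.inner_apply]
    apply Finset.sum_congr rfl
    intro j _
    simp [RCLike.inner_apply]
  unfold euclideanLaplacian
  rw [Finset.sum_congr rfl (fun i _ => hterm i)]
  rw [Finset.sum_add_distrib, Finset.sum_const, Finset.card_univ, Fintype.card_fin]
  rw [hNval x]
  have : ∑ i : Fin n, d2 * (2 * x i) * (2 * x i) = 4 * d2 * ∑ i : Fin n, (x i)^2 := by
    rw [Finset.mul_sum]; congr 1; ext i; ring
  rw [this, hsum]
  ring

lemma core_ineq (m ν K₁ K₂ nn p θ C₂ M₁ γ₂ s L B Sν Lν Q : ℝ)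
    (hm : 1 < m) (hν : 1 < ν) (hK₁ : 0 < K₁) (hK : K₁ ≤ K₂) (hnn : 3 ≤ nn)
    (hp : p = 1/(m-1))
    (hθ : θ = 4*p*(ν-1)/(nn-2))
    (hC : C₂ = (4*K₂/(m*(ν-1)*(nn-2)))^p)
    (hM : M₁ = max 1 (C₂^(m-1)*m*p*(ν-1)^2/K₁))
    (hγ : γ₂ = ((ν-1)*(2:ℝ)^(-(ν/(ν-1)))/(θ+M₁))^(ν-1))
    (hs : 2*ν+2*θ+2 ≤ s) (hL : 1 < L)
    (hSν : Sν = s^(-ν)) (hLν : Lν = L^(-ν))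
    (hBdef : B = s^(-(ν-1)) - γ₂*L^(-(ν-1))) (hBpos : 0 < B)
    (hQl : K₁*Sν ≤ Q) (hQu : Q ≤ K₂*Sν) :
    C₂^m*(p+1)*(ν-1)*(p*(ν-1)*Sν^2 + ν*B*Sν/s + (2-nn)*B*Sν)
      ≤ Q*C₂*p*(γ₂*(ν-1)*Lν - B) := by
  have hm1 : 0 < m - 1 := by linarith
  have hp0 : 0 < p := by rw [hp]; positivity
  have hν1 : 0 < ν - 1 := by linarith
  have hnn2 : (1:ℝ) ≤ nn - 2 := by linarith
  have hnn2' : 0 < nn - 2 := by linarith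
  have hK₂ : 0 < K₂ := lt_of_lt_of_le hK₁ hK
  have hθ0 : 0 < θ := by rw [hθ]; positivity
  have hbase : 0 < 4*K₂/(m*(ν-1)*(nn-2)) := by positivity
  have hC0 : 0 < C₂ := by rw [hC]; positivity
  have hCm1 : C₂^(m-1) = 4*K₂/(m*(ν-1)*(nn-2)) := by
    rw [hC, ← Real.rpow_mul hbase.le]
    rw [show p*(m-1) = 1 by rw [hp]; field_simp]
    exact Real.rpow_one _
  have hCm : C₂^m = C₂^(m-1)*C₂ := by
    rw [show m = (m-1)+1 by ring, Real.rpow_add hC0, Real.rpow_one]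
    norm_num
  have hM1 : (1:ℝ) ≤ M₁ := hM ▸ le_max_left _ _
  have hM2 : C₂^(m-1)*m*p*(ν-1)^2 ≤ K₁*M₁ := by
    have h := hM ▸ le_max_right 1 (C₂^(m-1)*m*p*(ν-1)^2/K₁)
    rw [div_le_iff₀ hK₁] at h
    linarith only [h]
  have hθM : 0 < θ + M₁ := by linarith
  obtain ⟨d, hd⟩ : ∃ d : ℝ, d = ν/(ν-1) := ⟨_, rfl⟩
  have hd0 : 0 < d := by rw [hd]; positivity
  obtain ⟨X, hX⟩ : ∃ X : ℝ, X = (ν-1)*(2:ℝ)^(-d)/(θ+M₁) := ⟨_, rfl⟩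
  rw [← hd, ← hX] at hγ
  have h2d : (0:ℝ) < (2:ℝ)^(-d) := Real.rpow_pos_of_pos two_pos _
  have hX0 : 0 < X := by rw [hX]; positivity
  have hγ0 : 0 < γ₂ := by rw [hγ]; exact Real.rpow_pos_of_pos hX0 _
  have hγX : γ₂ = X^(ν-1) := hγ
  clear hγ hC hM
  have hstep1 : γ₂^(-d) = X^(-ν) := by
    rw [hγX, ← Real.rpow_mul hX0.le]
    congr 1
    rw [hd]; field_simp
  have hstep2 : ((2:ℝ)*γ₂)^(-d) = (2:ℝ)^(-d) * X^(-ν) := by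
    rw [Real.mul_rpow (by norm_num) hγ0.le, hstep1]
  have hXcomb : X^(ν-1) * X^(-ν) = X⁻¹ := by
    rw [← Real.rpow_add hX0, show ν-1+-ν = -1 by ring, Real.rpow_neg_one]
  have hγkey : γ₂ * (ν-1) * ((2:ℝ)*γ₂)^(-d) = θ + M₁ := by
    rw [hstep2, hγX]
    have : X^(ν-1) * (ν-1) * ((2:ℝ)^(-d) * X^(-ν))
        = (ν-1) * (2:ℝ)^(-d) * (X^(ν-1) * X^(-ν)) := by ring
    rw [this, hXcomb, hX]
    field_simp
  -- basic facts on s, L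
  have hs0 : 0 < s := by linarith
  have hs1 : 1 < s := by linarith
  have hL0 : 0 < L := by linarith
  have hSν0 : 0 < Sν := hSν ▸ Real.rpow_pos_of_pos hs0 _
  have hLν0 : 0 < Lν := hLν ▸ Real.rpow_pos_of_pos hL0 _
  have hQ0 : 0 < Q := lt_of_lt_of_le (by positivity) hQl
  have hsS : s^(-(ν-1)) = s*Sν := by
    rw [show -(ν-1) = -ν+1 by ring, Real.rpow_add hs0, Real.rpow_one, hSν]
    ring
  have hLL : L^(-(ν-1)) = L*Lν := by
    rw [show -(ν-1) = -ν+1 by ring, Real.rpow_add hL0, Real.rpow_one, hLν]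
    ring
  have hBalt : B = s*Sν - γ₂*(L*Lν) := by rw [hBdef, hsS, hLL]
  have hpm : p*m = p+1 := by rw [hp]; field_simp; ring
  by_cases hcase : B ≤ θ*Sν
  · -- Case I : near the free boundary
    have hsθ : 0 ≤ s/2 - θ := by linarith
    have k1 : (s/2)*Sν ≤ γ₂*(L*Lν) := by
      linarith only [mul_nonneg hsθ hSν0.le, hcase, hBalt.le, hBalt.ge]
    obtain ⟨a, ha⟩ : ∃ a : ℝ, a = L^(ν-1) := ⟨_, rfl⟩
    obtain ⟨b, hb⟩ : ∃ b : ℝ, b = s^(ν-1) := ⟨_, rfl⟩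
    have ha0 : 0 < a := ha ▸ Real.rpow_pos_of_pos hL0 _
    have hb0 : 0 < b := hb ▸ Real.rpow_pos_of_pos hs0 _
    have hainv : L*Lν = a⁻¹ := by
      rw [← hLL, ha, ← Real.rpow_neg hL0.le]
    have hbinv : s*Sν = b⁻¹ := by
      rw [← hsS, hb, ← Real.rpow_neg hs0.le]
    have k1' : b⁻¹/2 ≤ γ₂*a⁻¹ := by
      rw [← hainv, ← hbinv]; linarith only [k1, hbinv, hsS]
    have k2 : a ≤ 2*γ₂*b := by
      have h := mul_le_mul_of_nonneg_left k1' (by positivity : (0:ℝ) ≤ 2*a*b)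
      have h2 : 2*a*b*(b⁻¹/2) = a := by field_simp
      have h3 : 2*a*b*(γ₂*a⁻¹) = 2*γ₂*b := by field_simp
      linarith only [h, h2.le, h2.ge, h3.le, h3.ge]
    have k3 : a^d ≤ (2*γ₂*b)^d := Real.rpow_le_rpow ha0.le k2 hd0.le
    have k4 : a^d = L^ν := by
      rw [ha, ← Real.rpow_mul hL0.le]; congr 1; rw [hd]; field_simp
    have k6 : b^d = s^ν := by
      rw [hb, ← Real.rpow_mul hs0.le]; congr 1; rw [hd]; field_simp
    have k5 : ((2:ℝ)*γ₂*b)^d = ((2:ℝ)*γ₂)^d * s^ν := by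
      rw [Real.mul_rpow (by positivity) hb0.le, k6]
    have k7 : L^ν ≤ ((2:ℝ)*γ₂)^d * s^ν := by rw [← k4, ← k5]; exact k3
    have hLpow : 0 < L^ν := Real.rpow_pos_of_pos hL0 _
    have hspow : 0 < s^ν := Real.rpow_pos_of_pos hs0 _
    have h2γd : 0 < ((2:ℝ)*γ₂)^d := Real.rpow_pos_of_pos (by positivity) _
    have k8 : ((2:ℝ)*γ₂)^(-d) * Sν ≤ Lν := by
      have hi : (((2:ℝ)*γ₂)^d * s^ν)⁻¹ ≤ (L^ν)⁻¹ := by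
        exact inv_anti₀ hLpow k7
      have hYn : (((2:ℝ)*γ₂)^d * s^ν)⁻¹ = ((2:ℝ)*γ₂)^(-d) * Sν := by
        rw [mul_inv, ← Real.rpow_neg (by positivity : (0:ℝ) ≤ 2*γ₂), hSν,
          ← Real.rpow_neg hs0.le]
      have hLn : (L^ν)⁻¹ = Lν := by rw [hLν, ← Real.rpow_neg hL0.le]
      rw [← hYn, ← hLn]; exact hi
    have k9 : (θ+M₁)*Sν ≤ γ₂*(ν-1)*Lν := by
      calc (θ+M₁)*Sν = (γ₂*(ν-1)*((2:ℝ)*γ₂)^(-d))*Sν := by rw [hγkey]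
        _ = (γ₂*(ν-1))*(((2:ℝ)*γ₂)^(-d)*Sν) := by ring
        _ ≤ (γ₂*(ν-1))*Lν := by
            apply mul_le_mul_of_nonneg_left k8 (by positivity)
        _ = γ₂*(ν-1)*Lν := by ring
    have k10 : M₁*Sν ≤ γ₂*(ν-1)*Lν - B := by
      have : θ*Sν + M₁*Sν = (θ+M₁)*Sν := by ring
      linarith only [k9, hcase, this]
    -- bound the bracket from above
    have hνs : ν ≤ s := by linarith
    have hBS : 0 < B*Sν := mul_pos hBpos hSν0
    have hdivb : ν*B*Sν/s ≤ B*Sν := by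
      rw [div_le_iff₀ hs0]
      have := mul_le_mul_of_nonneg_left hνs hBS.le
      linarith only [this]
    have hbr : p*(ν-1)*Sν^2 + ν*B*Sν/s + (2-nn)*B*Sν ≤ p*(ν-1)*Sν^2 := by
      have h6 := mul_le_mul_of_nonneg_right (show 2-nn ≤ -1 by linarith) hBS.le
      linarith only [hdivb, h6]
    have hG0 : 0 < γ₂*(ν-1)*Lν - B := lt_of_lt_of_le (by positivity) k10
    have hR1 : (K₁*Sν)*C₂*p*(M₁*Sν) ≤ Q*C₂*p*(γ₂*(ν-1)*Lν - B) := by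
      have h1 : (K₁*Sν)*C₂*p*(M₁*Sν) ≤ (K₁*Sν)*C₂*p*(γ₂*(ν-1)*Lν - B) := by
        apply mul_le_mul_of_nonneg_left k10 (by positivity)
      have h2 : (K₁*Sν)*(C₂*p*(γ₂*(ν-1)*Lν - B)) ≤ Q*(C₂*p*(γ₂*(ν-1)*Lν - B)) := by
        apply mul_le_mul_of_nonneg_right hQl (by positivity)
      calc (K₁*Sν)*C₂*p*(M₁*Sν) ≤ (K₁*Sν)*C₂*p*(γ₂*(ν-1)*Lν - B) := h1
        _ = (K₁*Sν)*(C₂*p*(γ₂*(ν-1)*Lν - B)) := by ring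
        _ ≤ Q*(C₂*p*(γ₂*(ν-1)*Lν - B)) := h2
        _ = Q*C₂*p*(γ₂*(ν-1)*Lν - B) := by ring
    have hL1 : C₂^m*(p+1)*(ν-1)*(p*(ν-1)*Sν^2 + ν*B*Sν/s + (2-nn)*B*Sν)
        ≤ C₂^m*(p+1)*(ν-1)*(p*(ν-1)*Sν^2) := by
      apply mul_le_mul_of_nonneg_left hbr (by positivity)
    have hL2 : C₂^m*(p+1)*(ν-1)*(p*(ν-1)*Sν^2) ≤ (K₁*Sν)*C₂*p*(M₁*Sν) := by
      have he : C₂^m*(p+1)*(ν-1)*(p*(ν-1)*Sν^2)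
          = (C₂^(m-1)*m*p*(ν-1)^2)*(C₂*p*Sν^2) := by
        rw [hCm, ← hpm]; ring
      rw [he]
      have h2 : (K₁*Sν)*C₂*p*(M₁*Sν) = (K₁*M₁)*(C₂*p*Sν^2) := by ring
      rw [h2]
      apply mul_le_mul_of_nonneg_right hM2 (by positivity)
    linarith only [hL1, hL2, hR1]
  · -- Case II : away from the free boundary
    push_neg at hcase
    have hνs : 2*ν ≤ (nn-2)*s := by
      have := mul_le_mul_of_nonneg_right hnn2 hs0.le
      linarith only [this, hs, hθ0]
    have hBS : 0 < B*Sν := mul_pos hBpos hSν0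
    have hdivb : ν*B*Sν/s ≤ (nn-2)/2*(B*Sν) := by
      rw [div_le_iff₀ hs0]
      have h := mul_le_mul_of_nonneg_left hνs (by positivity : (0:ℝ) ≤ B*Sν/2)
      linarith only [h]
    have hθid : p*(ν-1) = θ*(nn-2)/4 := by
      rw [hθ]; field_simp
    have hbr : p*(ν-1)*Sν^2 + ν*B*Sν/s + (2-nn)*B*Sν ≤ -((nn-2)/4)*(B*Sν) := by
      have h1 : p*(ν-1)*Sν^2 ≤ (nn-2)/4*(B*Sν) := by
        rw [hθid]
        have h := mul_le_mul_of_nonneg_right hcase.le hSν0.le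
        have h7 := mul_le_mul_of_nonneg_left h (by positivity : (0:ℝ) ≤ (nn-2)/4)
        linarith only [h7]
      linarith only [h1, hdivb]
    have hid2 : C₂^m*(p+1)*(ν-1)*((nn-2)/4) = C₂*p*K₂ := by
      have h4 : C₂^m*(p+1)*(ν-1)*((nn-2)/4) = (C₂^(m-1)*(m*(ν-1)*(nn-2))) * (C₂*p/4) := by
        rw [hCm, ← hpm]; ring
      have h5 : C₂^(m-1)*(m*(ν-1)*(nn-2)) = 4*K₂ := by
        rw [hCm1]
        exact div_mul_cancel₀ _ (by positivity)
      rw [h4, h5]; ring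
    have hLHS : C₂^m*(p+1)*(ν-1)*(p*(ν-1)*Sν^2 + ν*B*Sν/s + (2-nn)*B*Sν)
        ≤ -(C₂*p*K₂)*(B*Sν) := by
      calc C₂^m*(p+1)*(ν-1)*(p*(ν-1)*Sν^2 + ν*B*Sν/s + (2-nn)*B*Sν)
          ≤ C₂^m*(p+1)*(ν-1)*(-((nn-2)/4)*(B*Sν)) := by
            apply mul_le_mul_of_nonneg_left hbr (by positivity)
        _ = -(C₂^m*(p+1)*(ν-1)*((nn-2)/4))*(B*Sν) := by ring
        _ = -(C₂*p*K₂)*(B*Sν) := by rw [hid2]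
    rcases le_or_gt 0 (γ₂*(ν-1)*Lν - B) with hG | hG
    · have hpos : (0:ℝ) ≤ Q*C₂*p*(γ₂*(ν-1)*Lν - B) := by positivity
      have hneg := mul_pos (mul_pos (mul_pos hC0 hp0) hK₂) hBS
      linarith only [hLHS, hpos, hneg]
    · have hQG : (K₂*Sν)*(γ₂*(ν-1)*Lν - B) ≤ Q*(γ₂*(ν-1)*Lν - B) :=
        mul_le_mul_of_nonpos_right hQu hG.le
      have hGB : -B ≤ γ₂*(ν-1)*Lν - B := by
        have : 0 ≤ γ₂*(ν-1)*Lν := by positivity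
        linarith only [this]
      have h3 : (K₂*Sν)*(-B) ≤ (K₂*Sν)*(γ₂*(ν-1)*Lν - B) :=
        mul_le_mul_of_nonneg_left hGB (by positivity)
      have h5 : (K₂*Sν)*(-B) ≤ Q*(γ₂*(ν-1)*Lν - B) := le_trans h3 hQG
      have h6 := mul_le_mul_of_nonneg_left h5 (by positivity : (0:ℝ) ≤ C₂*p)
      linarith only [hLHS, h6]

/-- Supersolution barrier for the weighted Euclidean porous medium equation
(proof of Theorem 4.1 (i), upper bound): for a weight
`ρ(x) ≍ |x|^{-2} (log|x|)^{-ν}` with `ν > 1`, the function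
`ū(x,t) = C₂ (t+t₀)^{-1/(m-1)} [(log|x|)^{-(ν-1)} − γ₂ (log(t+t₀))^{-(ν-1)}]₊^{1/(m-1)}`
satisfies `ρ ∂_t ū ≥ Δ(ū^m)` in the region `|x| > R₀`, `t > 0` where its bracket is
positive, for suitable constants `C₂, γ₂ > 0`, `R₀ > 2`, `t₀ > e`. -/
theorem stmt_15 (n : ℕ) (hn : 3 ≤ n) (m ν K₁ K₂ : ℝ)
    (hm : 1 < m) (hν : 1 < ν) (hK₁ : 0 < K₁) (hK₂ : 0 < K₂) (hK : K₁ ≤ K₂)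
    (ρ : EuclideanSpace ℝ (Fin n) → ℝ) (hρmeas : Measurable ρ) (hρpos : ∀ x, 0 < ρ x)
    (hρlow : ∀ x, 2 ≤ ‖x‖ → K₁ / (‖x‖ ^ 2 * (Real.log ‖x‖) ^ ν) ≤ ρ x)
    (hρup : ∀ x, 2 ≤ ‖x‖ → ρ x ≤ K₂ / (‖x‖ ^ 2 * (Real.log ‖x‖) ^ ν)) :
    ∃ C₂ > (0:ℝ), ∃ γ₂ > (0:ℝ), ∃ R₀ > (2:ℝ), ∃ t₀ > Real.exp 1,
      ∀ U : EuclideanSpace ℝ (Fin n) → ℝ → ℝ,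
        (U = fun x t => C₂ * (t + t₀) ^ (-1 / (m - 1)) *
          (max ((Real.log ‖x‖) ^ (-(ν - 1))
            - γ₂ * (Real.log (t + t₀)) ^ (-(ν - 1))) 0) ^ (1 / (m - 1))) →
        ∀ x : EuclideanSpace ℝ (Fin n), R₀ < ‖x‖ → ∀ t : ℝ, 0 < t →
          γ₂ * (Real.log (t + t₀)) ^ (-(ν - 1)) < (Real.log ‖x‖) ^ (-(ν - 1)) →
          euclideanLaplacian n (fun y => U y t ^ m) x
            ≤ ρ x * deriv (fun τ : ℝ => U x τ) t := by
  have hm1 : 0 < m - 1 := by linarith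
  have hν1 : 0 < ν - 1 := by linarith
  have hnR : (3:ℝ) ≤ (n:ℝ) := by exact_mod_cast hn
  have hn2 : (1:ℝ) ≤ (n:ℝ) - 2 := by linarith
  obtain ⟨p, hp⟩ : ∃ p:ℝ, p = 1/(m-1) := ⟨_, rfl⟩
  have hp0 : 0 < p := by rw [hp]; positivity
  obtain ⟨θ, hθ⟩ : ∃ θ:ℝ, θ = 4*p*(ν-1)/((n:ℝ)-2) := ⟨_, rfl⟩
  have hθ0 : 0 < θ := by rw [hθ]; positivity
  obtain ⟨C₂, hC⟩ : ∃ c:ℝ, c = (4*K₂/(m*(ν-1)*((n:ℝ)-2)))^p := ⟨_, rfl⟩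
  have hC0 : 0 < C₂ := by rw [hC]; positivity
  obtain ⟨M₁, hM⟩ : ∃ M:ℝ, M = max 1 (C₂^(m-1)*m*p*(ν-1)^2/K₁) := ⟨_, rfl⟩
  obtain ⟨γ₂, hγ⟩ : ∃ g:ℝ, g = ((ν-1)*(2:ℝ)^(-(ν/(ν-1)))/(θ+M₁))^(ν-1) := ⟨_, rfl⟩
  have hM1 : (1:ℝ) ≤ M₁ := hM ▸ le_max_left _ _
  have hγ0 : 0 < γ₂ := by
    rw [hγ]
    apply Real.rpow_pos_of_pos
    have h2d : (0:ℝ) < (2:ℝ)^(-(ν/(ν-1))) := Real.rpow_pos_of_pos two_pos _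
    have : (0:ℝ) < θ + M₁ := by linarith
    positivity
  refine ⟨C₂, hC0, γ₂, hγ0, Real.exp (2*ν+2*θ+2), ?_, Real.exp 1 + 1,
    lt_add_of_pos_right _ one_pos, ?_⟩
  · have h1 : (2:ℝ) + 1 ≤ Real.exp 2 := by
      have := Real.add_one_le_exp (2:ℝ); linarith
    have h2 : Real.exp 2 ≤ Real.exp (2*ν+2*θ+2) :=
      Real.exp_le_exp.2 (by linarith only [hν, hθ0])
    linarith
  intro U hU x hx t ht hbr
  subst hU
  beta_reduce
  beta_reduce at hbr
  -- basic positivity facts at the point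
  have hR2 : (2:ℝ) < Real.exp (2*ν+2*θ+2) := by
    have h1 : (2:ℝ) + 1 ≤ Real.exp 2 := by
      have := Real.add_one_le_exp (2:ℝ); linarith
    have h2 : Real.exp 2 ≤ Real.exp (2*ν+2*θ+2) :=
      Real.exp_le_exp.2 (by linarith only [hν, hθ0])
    linarith only [h1, h2, Real.add_one_le_exp (2:ℝ)]
  have hr2 : 2 < ‖x‖ := lt_trans hR2 hx
  have hr0 : 0 < ‖x‖ := by linarith only [hr2]
  have hs : 2*ν+2*θ+2 < Real.log ‖x‖ := by
    have := Real.log_lt_log (Real.exp_pos _) hx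
    rwa [Real.log_exp] at this
  have hs0 : 0 < Real.log ‖x‖ := by linarith only [hs, hθ0, hν]
  have hs1 : 1 < Real.log ‖x‖ := by linarith only [hs, hθ0, hν]
  have hτ0 : 0 < t + (Real.exp 1 + 1) := by
    have h := Real.exp_pos 1; linarith only [h, ht]
  have hτne : t + (Real.exp 1 + 1) ≠ 0 := ne_of_gt hτ0
  have hτe : Real.exp 1 < t + (Real.exp 1 + 1) := by linarith only [ht]
  have hL1 : 1 < Real.log (t + (Real.exp 1 + 1)) := by
    have := Real.log_lt_log (Real.exp_pos 1) hτe
    rwa [Real.log_exp] at this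
  have hL0 : 0 < Real.log (t + (Real.exp 1 + 1)) := by linarith only [hL1]
  have hLne : Real.log (t + (Real.exp 1 + 1)) ≠ 0 := ne_of_gt hL0
  have hBpos : 0 < Real.log ‖x‖ ^ (-(ν-1))
      - γ₂ * Real.log (t + (Real.exp 1 + 1)) ^ (-(ν-1)) := sub_pos.2 hbr
  have hBne : Real.log ‖x‖ ^ (-(ν-1))
      - γ₂ * Real.log (t + (Real.exp 1 + 1)) ^ (-(ν-1)) ≠ 0 := ne_of_gt hBpos
  -- ===== time derivative =====
  have h1 : HasDerivAt (fun τ' : ℝ => τ' + (Real.exp 1 + 1)) 1 t :=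
    (hasDerivAt_id t).add_const (Real.exp 1 + 1)
  have h2 : HasDerivAt (fun τ' : ℝ => Real.log (τ' + (Real.exp 1 + 1)))
      (1 / (t + (Real.exp 1 + 1))) t := h1.log hτne
  have h3 : HasDerivAt (fun τ' : ℝ => Real.log (τ' + (Real.exp 1 + 1)) ^ (-(ν-1)))
      (1 / (t + (Real.exp 1 + 1)) * -(ν-1)
        * Real.log (t + (Real.exp 1 + 1)) ^ (-(ν-1) - 1)) t :=
    h2.rpow_const (Or.inl hLne)
  have h4 : HasDerivAt (fun τ' : ℝ => Real.log ‖x‖ ^ (-(ν-1))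
        - γ₂ * Real.log (τ' + (Real.exp 1 + 1)) ^ (-(ν-1)))
      (-(γ₂ * (1 / (t + (Real.exp 1 + 1)) * -(ν-1)
        * Real.log (t + (Real.exp 1 + 1)) ^ (-(ν-1) - 1)))) t :=
    (h3.const_mul γ₂).const_sub (Real.log ‖x‖ ^ (-(ν-1)))
  have h5 := h4.rpow_const (p := 1/(m-1)) (Or.inl hBne)
  have h6 := h1.rpow_const (p := -1/(m-1)) (Or.inl hτne)
  have h7 := (h6.const_mul C₂).mul h5
  have hev : ∀ᶠ τ' in nhds t, 0 < Real.log ‖x‖ ^ (-(ν-1))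
      - γ₂ * Real.log (τ' + (Real.exp 1 + 1)) ^ (-(ν-1)) :=
    h4.continuousAt.eventually (eventually_gt_nhds hBpos)
  have h8 : HasDerivAt (fun τ' : ℝ => C₂ * (τ' + (Real.exp 1 + 1)) ^ (-1/(m-1)) *
      (max (Real.log ‖x‖ ^ (-(ν-1))
        - γ₂ * Real.log (τ' + (Real.exp 1 + 1)) ^ (-(ν-1))) 0) ^ (1/(m-1)))
      (C₂ * (1 * (-1/(m-1)) * (t + (Real.exp 1 + 1)) ^ (-1/(m-1) - 1)) *
        (Real.log ‖x‖ ^ (-(ν-1))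
          - γ₂ * Real.log (t + (Real.exp 1 + 1)) ^ (-(ν-1))) ^ (1/(m-1))
       + C₂ * (t + (Real.exp 1 + 1)) ^ (-1/(m-1)) *
        (-(γ₂ * (1 / (t + (Real.exp 1 + 1)) * -(ν-1)
          * Real.log (t + (Real.exp 1 + 1)) ^ (-(ν-1) - 1))) * (1/(m-1)) *
          (Real.log ‖x‖ ^ (-(ν-1))
            - γ₂ * Real.log (t + (Real.exp 1 + 1)) ^ (-(ν-1))) ^ (1/(m-1) - 1))) t := by
    apply h7.congr_of_eventuallyEq
    filter_upwards [hev] with τ' hτ'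
    rw [max_eq_left hτ'.le]
    rfl
  -- clean form of the time derivative
  have hTsplit : (t + (Real.exp 1 + 1)) ^ (-1/(m-1))
      = (t + (Real.exp 1 + 1)) ^ (-1/(m-1) - 1) * (t + (Real.exp 1 + 1)) := by
    have h := Real.rpow_add_one hτne (-1/(m-1) - 1)
    rw [show -1/(m-1) - 1 + 1 = -1/(m-1) by ring] at h
    exact h
  have hBsplit : (Real.log ‖x‖ ^ (-(ν-1))
        - γ₂ * Real.log (t + (Real.exp 1 + 1)) ^ (-(ν-1))) ^ (1/(m-1))
      = (Real.log ‖x‖ ^ (-(ν-1))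
        - γ₂ * Real.log (t + (Real.exp 1 + 1)) ^ (-(ν-1))) ^ (1/(m-1) - 1)
        * (Real.log ‖x‖ ^ (-(ν-1))
        - γ₂ * Real.log (t + (Real.exp 1 + 1)) ^ (-(ν-1))) := by
    have h := Real.rpow_add_one hBne (1/(m-1) - 1)
    rw [show 1/(m-1) - 1 + 1 = 1/(m-1) by ring] at h
    exact h
  have hDerEq : deriv (fun τ' : ℝ => C₂ * (τ' + (Real.exp 1 + 1)) ^ (-1/(m-1)) *
      (max (Real.log ‖x‖ ^ (-(ν-1))
        - γ₂ * Real.log (τ' + (Real.exp 1 + 1)) ^ (-(ν-1))) 0) ^ (1/(m-1))) t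
      = C₂ * (1/(m-1)) * (t + (Real.exp 1 + 1)) ^ (-1/(m-1) - 1) *
        (Real.log ‖x‖ ^ (-(ν-1))
          - γ₂ * Real.log (t + (Real.exp 1 + 1)) ^ (-(ν-1))) ^ (1/(m-1) - 1) *
        (γ₂ * (ν-1) * Real.log (t + (Real.exp 1 + 1)) ^ (-ν)
          - (Real.log ‖x‖ ^ (-(ν-1))
            - γ₂ * Real.log (t + (Real.exp 1 + 1)) ^ (-(ν-1)))) := by
    refine Eq.trans h8.deriv ?_
    rw [show -(ν-1) - 1 = -ν by ring]
    rw [hTsplit, hBsplit]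
    field_simp
    ring
  -- ===== spatial Laplacian =====
  obtain ⟨cc, hcc⟩ : ∃ c:ℝ, c = C₂^m * (t + (Real.exp 1 + 1)) ^ (-1/(m-1) - 1) :=
    ⟨_, rfl⟩
  have hq₀0 : (0:ℝ) < ‖x‖^2 := by positivity
  have hq₀ne : (‖x‖^2 : ℝ) ≠ 0 := ne_of_gt hq₀0
  have hq₀1 : (1:ℝ) < ‖x‖^2 :=
    one_lt_pow₀ (by linarith only [hr2]) (by norm_num)
  have hq₀s : Real.log (‖x‖^2) / 2 = Real.log ‖x‖ := by
    rw [Real.log_pow]; push_cast; ring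
  have hSq₀ : 0 < Real.log (‖x‖^2) / 2 := by rw [hq₀s]; exact hs0
  have hSq₀ne : Real.log (‖x‖^2) / 2 ≠ 0 := ne_of_gt hSq₀
  have hB₀ : 0 < (Real.log (‖x‖^2) / 2) ^ (-(ν-1))
      - γ₂ * Real.log (t + (Real.exp 1 + 1)) ^ (-(ν-1)) := by
    rw [hq₀s]; exact hBpos
  have hB₀ne : (Real.log (‖x‖^2) / 2) ^ (-(ν-1))
      - γ₂ * Real.log (t + (Real.exp 1 + 1)) ^ (-(ν-1)) ≠ 0 := ne_of_gt hB₀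
  -- the radial profile and its derivatives
  have hφ : ∀ᶠ y in nhds x,
      (C₂ * (t + (Real.exp 1 + 1)) ^ (-1/(m-1)) *
        (max (Real.log ‖y‖ ^ (-(ν-1))
          - γ₂ * Real.log (t + (Real.exp 1 + 1)) ^ (-(ν-1))) 0) ^ (1/(m-1))) ^ m
      = (fun q : ℝ => cc * ((Real.log q / 2) ^ (-(ν-1))
          - γ₂ * Real.log (t + (Real.exp 1 + 1)) ^ (-(ν-1))) ^ (1/(m-1)+1)) (‖y‖^2) := by
    have ev1 : ∀ᶠ y : EuclideanSpace ℝ (Fin n) in nhds x, 1 < ‖y‖ :=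
      continuous_norm.continuousAt.eventually
        (eventually_gt_nhds (by linarith only [hr2]))
    have c1 : ContinuousAt (fun y : EuclideanSpace ℝ (Fin n) => Real.log ‖y‖) x :=
      (Real.continuousAt_log (ne_of_gt hr0)).comp continuous_norm.continuousAt
    have c2 : ContinuousAt
        (fun y : EuclideanSpace ℝ (Fin n) => Real.log ‖y‖ ^ (-(ν-1))) x :=
      c1.rpow_const (Or.inl (ne_of_gt hs0))
    have ev2 : ∀ᶠ y : EuclideanSpace ℝ (Fin n) in nhds x,
        γ₂ * Real.log (t + (Real.exp 1 + 1)) ^ (-(ν-1)) < Real.log ‖y‖ ^ (-(ν-1)) :=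
      c2.eventually (eventually_gt_nhds hbr)
    filter_upwards [ev1, ev2] with y hy1 hy2
    have hy0 : (0:ℝ) < ‖y‖ := by linarith only [hy1]
    have hBy : 0 < Real.log ‖y‖ ^ (-(ν-1))
        - γ₂ * Real.log (t + (Real.exp 1 + 1)) ^ (-(ν-1)) := sub_pos.2 hy2
    have hyl : Real.log (‖y‖^2) / 2 = Real.log ‖y‖ := by
      rw [Real.log_pow]; push_cast; ring
    show _ = _ * _
    rw [hyl, max_eq_left hBy.le]
    rw [Real.mul_rpow (by positivity) (Real.rpow_nonneg hBy.le _)]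
    rw [Real.mul_rpow hC0.le (Real.rpow_nonneg hτ0.le _)]
    rw [← Real.rpow_mul hτ0.le, ← Real.rpow_mul hBy.le]
    rw [show -1/(m-1) * m = -1/(m-1) - 1 by field_simp; try ring]
    rw [show 1/(m-1) * m = 1/(m-1) + 1 by field_simp; try ring]
    rw [hcc]
    try ring
  have hg1 : ∀ᶠ q in nhds (‖x‖^2), HasDerivAt
      (fun q : ℝ => cc * ((Real.log q / 2) ^ (-(ν-1))
        - γ₂ * Real.log (t + (Real.exp 1 + 1)) ^ (-(ν-1))) ^ (1/(m-1)+1))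
      ((fun q : ℝ => cc * (q⁻¹ / 2 * -(ν-1) * (Real.log q / 2) ^ (-(ν-1) - 1)
        * (1/(m-1)+1) * ((Real.log q / 2) ^ (-(ν-1))
          - γ₂ * Real.log (t + (Real.exp 1 + 1)) ^ (-(ν-1))) ^ (1/(m-1)+1-1))) q) q := by
    have evA : ∀ᶠ q : ℝ in nhds (‖x‖^2), 1 < q := eventually_gt_nhds hq₀1
    have c1 : ContinuousAt (fun q : ℝ => Real.log q / 2) (‖x‖^2) :=
      (Real.continuousAt_log hq₀ne).div_const 2
    have c2 : ContinuousAt (fun q : ℝ => (Real.log q / 2) ^ (-(ν-1))) (‖x‖^2) :=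
      c1.rpow_const (Or.inl hSq₀ne)
    have hx2 : γ₂ * Real.log (t + (Real.exp 1 + 1)) ^ (-(ν-1))
        < (Real.log (‖x‖^2) / 2) ^ (-(ν-1)) := by rw [hq₀s]; exact hbr
    have evB := c2.eventually (eventually_gt_nhds hx2)
    filter_upwards [evA, evB] with q hq1' hq2'
    have hq0 : (0:ℝ) < q := by linarith only [hq1']
    have hlq : 0 < Real.log q := Real.log_pos hq1'
    have hSq : 0 < Real.log q / 2 := by positivity
    have hBq : 0 < (Real.log q / 2) ^ (-(ν-1))
        - γ₂ * Real.log (t + (Real.exp 1 + 1)) ^ (-(ν-1)) := sub_pos.2 hq2'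
    exact (((((Real.hasDerivAt_log (ne_of_gt hq0)).div_const 2).rpow_const
      (Or.inl (ne_of_gt hSq))).sub_const _).rpow_const
      (Or.inl (ne_of_gt hBq))).const_mul cc
  have ha1 := ((hasDerivAt_inv hq₀ne).div_const 2).mul_const (-(ν-1))
  have ha2 := ((Real.hasDerivAt_log hq₀ne).div_const 2).rpow_const
    (p := -(ν-1) - 1) (Or.inl hSq₀ne)
  have ha := ha1.mul ha2
  have hb := ((((Real.hasDerivAt_log hq₀ne).div_const 2).rpow_const
    (Or.inl hSq₀ne)).sub_const
      (γ₂ * Real.log (t + (Real.exp 1 + 1)) ^ (-(ν-1)))).rpow_const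
    (p := 1/(m-1)+1-1) (Or.inl hB₀ne)
  have hg2 := ((ha.mul_const (1/(m-1)+1)).mul hb).const_mul cc
  have hlap := lap_radial n _ _ _ _ x hφ hg1 hg2
  -- clean form of the Laplacian
  have hsνsplit : Real.log ‖x‖ ^ (-ν + -1)
      = Real.log ‖x‖ ^ (-ν) * (Real.log ‖x‖)⁻¹ := by
    rw [Real.rpow_add hs0, Real.rpow_neg_one]
  have hBsplit2 : (Real.log ‖x‖ ^ (-(ν-1))
        - γ₂ * Real.log (t + (Real.exp 1 + 1)) ^ (-(ν-1))) ^ (1/(m-1))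
      = (Real.log ‖x‖ ^ (-(ν-1))
        - γ₂ * Real.log (t + (Real.exp 1 + 1)) ^ (-(ν-1))) ^ (1/(m-1) - 1)
        * (Real.log ‖x‖ ^ (-(ν-1))
        - γ₂ * Real.log (t + (Real.exp 1 + 1)) ^ (-(ν-1))) := hBsplit
  have hLapEq : euclideanLaplacian n
      (fun y => (C₂ * (t + (Real.exp 1 + 1)) ^ (-1/(m-1)) *
        (max (Real.log ‖y‖ ^ (-(ν-1))
          - γ₂ * Real.log (t + (Real.exp 1 + 1)) ^ (-(ν-1))) 0) ^ (1/(m-1))) ^ m) x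
      = cc * (1/(m-1)+1) * (ν-1) * (‖x‖^2)⁻¹ *
        (Real.log ‖x‖ ^ (-(ν-1))
          - γ₂ * Real.log (t + (Real.exp 1 + 1)) ^ (-(ν-1))) ^ (1/(m-1) - 1) *
        ((1/(m-1)) * (ν-1) * (Real.log ‖x‖ ^ (-ν))^2
          + ν * (Real.log ‖x‖ ^ (-(ν-1))
            - γ₂ * Real.log (t + (Real.exp 1 + 1)) ^ (-(ν-1)))
            * (Real.log ‖x‖ ^ (-ν)) / Real.log ‖x‖
          + (2 - (n:ℝ)) * (Real.log ‖x‖ ^ (-(ν-1))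
            - γ₂ * Real.log (t + (Real.exp 1 + 1)) ^ (-(ν-1)))
            * (Real.log ‖x‖ ^ (-ν))) := by
    refine Eq.trans hlap ?_
    simp only [Pi.mul_apply]
    rw [hq₀s]
    rw [show (1/(m-1)+1-1 : ℝ) = 1/(m-1) by ring]
    rw [show (-(ν-1) - 1 : ℝ) = -ν by ring]
    rw [show (-ν - 1 : ℝ) = -ν + -1 by ring]
    rw [hsνsplit, hBsplit2]
    have hsne : Real.log ‖x‖ ≠ 0 := ne_of_gt hs0
    field_simp
    ring
  -- ===== weight bounds =====
  have hsp : 0 < Real.log ‖x‖ ^ ν := Real.rpow_pos_of_pos hs0 _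
  have hQl : K₁ * Real.log ‖x‖ ^ (-ν) ≤ ρ x * ‖x‖^2 := by
    have h1 := (div_le_iff₀ (by positivity : (0:ℝ) < ‖x‖^2 * Real.log ‖x‖ ^ ν)).1
      (hρlow x (by linarith))
    rw [Real.rpow_neg hs0.le, ← div_eq_mul_inv, div_le_iff₀ hsp]
    linarith only [h1]
  have hQu : ρ x * ‖x‖^2 ≤ K₂ * Real.log ‖x‖ ^ (-ν) := by
    have h1 := (le_div_iff₀ (by positivity : (0:ℝ) < ‖x‖^2 * Real.log ‖x‖ ^ ν)).1
      (hρup x (by linarith))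
    rw [Real.rpow_neg hs0.le, ← div_eq_mul_inv, le_div_iff₀ hsp]
    linarith only [h1]
  -- ===== core inequality =====
  have core := core_ineq m ν K₁ K₂ ((n:ℝ)) p θ C₂ M₁ γ₂ (Real.log ‖x‖)
    (Real.log (t + (Real.exp 1 + 1)))
    (Real.log ‖x‖ ^ (-(ν-1)) - γ₂ * Real.log (t + (Real.exp 1 + 1)) ^ (-(ν-1)))
    (Real.log ‖x‖ ^ (-ν)) (Real.log (t + (Real.exp 1 + 1)) ^ (-ν))
    (ρ x * ‖x‖^2)
    hm hν hK₁ hK hnR hp hθ hC hM hγ hs.le hL1 rfl rfl rfl hBpos hQl hQu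
  -- ===== conclude =====
  rw [hLapEq, hDerEq, ← hp]
  have hfac : (0:ℝ) ≤ (t + (Real.exp 1 + 1)) ^ (-1/(m-1) - 1) *
      (Real.log ‖x‖ ^ (-(ν-1))
        - γ₂ * Real.log (t + (Real.exp 1 + 1)) ^ (-(ν-1))) ^ (p - 1) *
      (‖x‖^2)⁻¹ := by positivity
  have hkey := mul_le_mul_of_nonneg_left core hfac
  have e1 : cc * (p+1) * (ν-1) * (‖x‖^2)⁻¹ *
      (Real.log ‖x‖ ^ (-(ν-1))
        - γ₂ * Real.log (t + (Real.exp 1 + 1)) ^ (-(ν-1))) ^ (p - 1) *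
      (p * (ν-1) * (Real.log ‖x‖ ^ (-ν))^2
        + ν * (Real.log ‖x‖ ^ (-(ν-1))
          - γ₂ * Real.log (t + (Real.exp 1 + 1)) ^ (-(ν-1)))
          * (Real.log ‖x‖ ^ (-ν)) / Real.log ‖x‖
        + (2 - (n:ℝ)) * (Real.log ‖x‖ ^ (-(ν-1))
          - γ₂ * Real.log (t + (Real.exp 1 + 1)) ^ (-(ν-1)))
          * (Real.log ‖x‖ ^ (-ν)))
      = ((t + (Real.exp 1 + 1)) ^ (-1/(m-1) - 1) *
        (Real.log ‖x‖ ^ (-(ν-1))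
          - γ₂ * Real.log (t + (Real.exp 1 + 1)) ^ (-(ν-1))) ^ (p - 1) *
        (‖x‖^2)⁻¹) *
        (C₂^m * (p+1) * (ν-1) *
          (p * (ν-1) * (Real.log ‖x‖ ^ (-ν))^2
          + ν * (Real.log ‖x‖ ^ (-(ν-1))
            - γ₂ * Real.log (t + (Real.exp 1 + 1)) ^ (-(ν-1)))
            * (Real.log ‖x‖ ^ (-ν)) / Real.log ‖x‖
          + (2 - (n:ℝ)) * (Real.log ‖x‖ ^ (-(ν-1))
            - γ₂ * Real.log (t + (Real.exp 1 + 1)) ^ (-(ν-1)))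
            * (Real.log ‖x‖ ^ (-ν)))) := by
    rw [hcc]; ring
  have e2 : ρ x * (C₂ * p * (t + (Real.exp 1 + 1)) ^ (-1/(m-1) - 1) *
      (Real.log ‖x‖ ^ (-(ν-1))
        - γ₂ * Real.log (t + (Real.exp 1 + 1)) ^ (-(ν-1))) ^ (p - 1) *
      (γ₂ * (ν-1) * Real.log (t + (Real.exp 1 + 1)) ^ (-ν)
        - (Real.log ‖x‖ ^ (-(ν-1))
          - γ₂ * Real.log (t + (Real.exp 1 + 1)) ^ (-(ν-1)))))
      = ((t + (Real.exp 1 + 1)) ^ (-1/(m-1) - 1) *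
        (Real.log ‖x‖ ^ (-(ν-1))
          - γ₂ * Real.log (t + (Real.exp 1 + 1)) ^ (-(ν-1))) ^ (p - 1) *
        (‖x‖^2)⁻¹) *
        ((ρ x * ‖x‖^2) * C₂ * p *
          (γ₂ * (ν-1) * Real.log (t + (Real.exp 1 + 1)) ^ (-ν)
            - (Real.log ‖x‖ ^ (-(ν-1))
              - γ₂ * Real.log (t + (Real.exp 1 + 1)) ^ (-(ν-1))))) := by
    field_simp
  rw [e1, e2]
  exact hkey
end

section
/- Let n ≥ 3 be an integer and let m > 1, ν > 1, K₁, K₂ > 0 with K₁ ≤ K₂. Let ρ : ℝⁿ → (0,∞) be a measurable function satisfying K₁·|x|^{−2}·(log|x|)^{−ν} ≤ ρ(x) ≤ K₂·|x|^{−2}·(log|x|)^{−ν} for all |x| ≥ 2. Then there exist constants C₁ > 0, γ₁ > 0, R₀ > 2 and t₀ > e such that the function u̲(x,t) := C₁·(t+t₀)^{−1/(m−1)}·[(log|x|)^{−(ν−1)} − γ₁·(log(t+t₀))^{−(ν−1)}]₊^{1/(m−1)} satisfies ρ(x)·∂_t u̲(x,t) ≤ Δ_x(u̲^m)(x,t)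 at every point (x,t) with |x| > R₀, t > 0 and (log|x|)^{−(ν−1)} > γ₁·(log(t+t₀))^{−(ν−1)}. -/
open Real Filter Set MeasureTheory

lemma laplacian_radial (n : ℕ) (x : EuclideanSpace ℝ (Fin n))
    (φ : EuclideanSpace ℝ (Fin n) → ℝ) (g g' : ℝ → ℝ) (g''x : ℝ)
    (hφ : ∀ᶠ y in nhds x, φ y = g (‖y‖ ^ 2))
    (hg : ∀ᶠ s in nhds (‖x‖ ^ 2), HasDerivAt g (g' s) s)
    (hg' : HasDerivAt g' g''x (‖x‖ ^ 2)) :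
    euclideanLaplacian n φ x
      = 2 * n * g' (‖x‖ ^ 2) + 4 * ‖x‖ ^ 2 * g''x := by
  have hq : ∀ y : EuclideanSpace ℝ (Fin n),
      HasFDerivAt (fun z : EuclideanSpace ℝ (Fin n) => ‖z‖ ^ 2) (2 • (innerSL ℝ y)) y :=
    fun y => (hasStrictFDerivAt_norm_sq y).hasFDerivAt
  -- Step A : eventually, fderiv φ y (e i) = 2 * g' (‖y‖^2) * y i
  have hA : ∀ i : Fin n, ∀ᶠ y in nhds x,
      fderiv ℝ φ y (EuclideanSpace.single i 1) = 2 * g' (‖y‖ ^ 2) * y i := by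
    intro i
    have h1 : ∀ᶠ y in nhds x, φ =ᶠ[nhds y] fun z => g (‖z‖ ^ 2) := hφ.eventually_nhds
    have h2 : ∀ᶠ y in nhds x, HasDerivAt g (g' (‖y‖ ^ 2)) (‖y‖ ^ 2) := by
      have hc : ContinuousAt (fun z : EuclideanSpace ℝ (Fin n) => ‖z‖ ^ 2) x :=
        (continuous_norm.pow 2).continuousAt
      exact hc.tendsto.eventually hg
    filter_upwards [h1, h2] with y hy1 hy2
    have hcomp : HasFDerivAt φ ((g' (‖y‖ ^ 2)) • (2 • (innerSL ℝ y))) y := by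
      have h := hy2.comp_hasFDerivAt y (hq y)
      have hy1' : φ =ᶠ[nhds y] g ∘ (fun z : EuclideanSpace ℝ (Fin n) => ‖z‖ ^ 2) := hy1
      exact h.congr_of_eventuallyEq hy1'
    rw [hcomp.fderiv]
    simp [EuclideanSpace.inner_single_right, real_inner_comm]
    ring
  -- Step B : compute each second derivative
  have hB : ∀ i : Fin n,
      fderiv ℝ (fun y => fderiv ℝ φ y (EuclideanSpace.single i 1)) x
        (EuclideanSpace.single i 1) = 4 * g''x * (x i) ^ 2 + 2 * g' (‖x‖ ^ 2) := by
    intro i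
    have hψ : HasFDerivAt (fun y : EuclideanSpace ℝ (Fin n) => 2 * g' (‖y‖ ^ 2) * y i)
        ((x i) • ((2 * g''x) • (2 • (innerSL ℝ x)))
          + (2 * g' (‖x‖ ^ 2)) • (EuclideanSpace.proj i : EuclideanSpace ℝ (Fin n) →L[ℝ] ℝ)) x := by
      have hgq : HasFDerivAt (fun y : EuclideanSpace ℝ (Fin n) => 2 * g' (‖y‖ ^ 2))
          ((2 * g''x) • (2 • (innerSL ℝ x))) x := by
        have := hg'.comp_hasFDerivAt x (hq x)
        have h2 := this.const_mul 2
        exact h2.congr_fderiv (by ext v; simp; ring)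
      have hproj : HasFDerivAt (fun y : EuclideanSpace ℝ (Fin n) => y i)
          (EuclideanSpace.proj i : EuclideanSpace ℝ (Fin n) →L[ℝ] ℝ) x :=
        (EuclideanSpace.proj i : EuclideanSpace ℝ (Fin n) →L[ℝ] ℝ).hasFDerivAt
      have := hgq.mul' hproj
      exact this.congr_fderiv (by ext v; simp; ring)
    have heq : fderiv ℝ (fun y => fderiv ℝ φ y (EuclideanSpace.single i 1)) x
        = fderiv ℝ (fun y : EuclideanSpace ℝ (Fin n) => 2 * g' (‖y‖ ^ 2) * y i) x :=
      Filter.EventuallyEq.fderiv_eq (hA i)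
    rw [heq, hψ.fderiv]
    simp [EuclideanSpace.inner_single_right, real_inner_comm, EuclideanSpace.single_apply]
    ring
  unfold euclideanLaplacian
  simp only [hB]
  rw [Finset.sum_add_distrib, Finset.sum_const]
  have hx2 : ∑ i, (x i)^2 = ‖x‖^2 := by
    rw [EuclideanSpace.norm_sq_eq]; simp [sq]
  rw [← Finset.mul_sum, hx2]
  simp [Finset.card_univ]
  ring

lemma deriv_time (C₁ γ₁ β p t₀ a t : ℝ) (hT : 0 < t + t₀) (hL : 0 < Real.log (t + t₀))
    (hB : 0 < a - γ₁ * (Real.log (t + t₀)) ^ (-β)) :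
    deriv (fun τ : ℝ => C₁ * (τ + t₀) ^ (-p) *
        (max (a - γ₁ * (Real.log (τ + t₀)) ^ (-β)) 0) ^ p) t
      = C₁ * p * (t + t₀) ^ (-p - 1) * (a - γ₁ * (Real.log (t + t₀)) ^ (-β)) ^ (p - 1) *
        (γ₁ * β * (Real.log (t + t₀)) ^ (-β - 1)
          - (a - γ₁ * (Real.log (t + t₀)) ^ (-β))) := by
  set T := t + t₀ with hTdef
  set L := Real.log T with hLdef
  set B := a - γ₁ * L ^ (-β) with hBdef
  have h0 : HasDerivAt (fun τ : ℝ => τ + t₀) 1 t := (hasDerivAt_id t).add_const t₀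
  have h1 : HasDerivAt (fun τ : ℝ => (τ + t₀) ^ (-p)) (1 * (-p) * T ^ (-p - 1)) t :=
    h0.rpow_const (Or.inl hT.ne')
  have h2 : HasDerivAt (fun τ : ℝ => Real.log (τ + t₀)) (1 / T) t := h0.log hT.ne'
  have h3 : HasDerivAt (fun τ : ℝ => (Real.log (τ + t₀)) ^ (-β))
      ((1 / T) * (-β) * L ^ (-β - 1)) t := h2.rpow_const (Or.inl hL.ne')
  have h4 : HasDerivAt (fun τ : ℝ => a - γ₁ * (Real.log (τ + t₀)) ^ (-β))
      (-(γ₁ * ((1 / T) * (-β) * L ^ (-β - 1)))) t := (h3.const_mul γ₁).const_sub a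
  have h5 : HasDerivAt (fun τ : ℝ => (a - γ₁ * (Real.log (τ + t₀)) ^ (-β)) ^ p)
      ((-(γ₁ * ((1 / T) * (-β) * L ^ (-β - 1)))) * p * B ^ (p - 1)) t :=
    h4.rpow_const (Or.inl hB.ne')
  have h6 : HasDerivAt (fun τ : ℝ => (C₁ * (τ + t₀) ^ (-p)) *
      ((a - γ₁ * (Real.log (τ + t₀)) ^ (-β)) ^ p))
      ((C₁ * (1 * (-p) * T ^ (-p - 1))) * B ^ p
        + (C₁ * T ^ (-p)) * ((-(γ₁ * ((1 / T) * (-β) * L ^ (-β - 1)))) * p * B ^ (p - 1))) t :=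
    (h1.const_mul C₁).mul h5
  have hev : ∀ᶠ τ in nhds t, 0 < a - γ₁ * (Real.log (τ + t₀)) ^ (-β) :=
    h4.continuousAt.tendsto.eventually (eventually_gt_nhds hB)
  have heq : (fun τ : ℝ => C₁ * (τ + t₀) ^ (-p) *
      (max (a - γ₁ * (Real.log (τ + t₀)) ^ (-β)) 0) ^ p)
      =ᶠ[nhds t] (fun τ : ℝ => (C₁ * (τ + t₀) ^ (-p)) *
      ((a - γ₁ * (Real.log (τ + t₀)) ^ (-β)) ^ p)) := by
    filter_upwards [hev] with τ hτ
    rw [max_eq_left hτ.le]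
  rw [heq.deriv_eq, h6.deriv]
  have e1 : T ^ (-p) * (1 / T) = T ^ (-p - 1) := by
    rw [one_div, ← Real.rpow_neg_one T, ← Real.rpow_add hT]; ring_nf
  have e2 : (B : ℝ) ^ p = B ^ (p - 1) * B := by
    have h := Real.rpow_add hB (p - 1) 1
    rw [Real.rpow_one] at h
    conv_lhs => rw [show p = p - 1 + 1 by ring]
    rw [h]
  rw [e2]
  calc C₁ * (1 * (-p) * T ^ (-p - 1)) * (B ^ (p - 1) * B)
        + C₁ * T ^ (-p) * (-(γ₁ * (1 / T * (-β) * L ^ (-β - 1))) * p * B ^ (p - 1))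
      = C₁ * (1 * (-p) * T ^ (-p - 1)) * (B ^ (p - 1) * B)
        + C₁ * (T ^ (-p) * (1 / T)) * ((γ₁ * β * L ^ (-β - 1)) * p * B ^ (p - 1)) := by ring
    _ = _ := by rw [e1]; ring

lemma hasDerivAt_g (c k β e σ : ℝ) (hσ : 0 < σ) (hlog : 0 < Real.log σ)
    (hA : (Real.log σ / 2) ^ (-β) - k ≠ 0) :
    HasDerivAt (fun τ : ℝ => c * ((Real.log τ / 2) ^ (-β) - k) ^ e)
      (c * e * (-β) / 2 * (σ⁻¹ * ((Real.log σ / 2) ^ (-β - 1)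
        * ((Real.log σ / 2) ^ (-β) - k) ^ (e - 1)))) σ := by
  have hlog' : HasDerivAt Real.log σ⁻¹ σ := Real.hasDerivAt_log hσ.ne'
  have hdiv : HasDerivAt (fun τ : ℝ => Real.log τ / 2) (σ⁻¹ / 2) σ := hlog'.div_const 2
  have hh : (0:ℝ) < Real.log σ / 2 := by positivity
  have hrpow : HasDerivAt (fun τ : ℝ => (Real.log τ / 2) ^ (-β))
      (σ⁻¹ / 2 * (-β) * (Real.log σ / 2) ^ (-β - 1)) σ :=
    hdiv.rpow_const (Or.inl hh.ne')
  have hsub : HasDerivAt (fun τ : ℝ => (Real.log τ / 2) ^ (-β) - k)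
      (σ⁻¹ / 2 * (-β) * (Real.log σ / 2) ^ (-β - 1)) σ := hrpow.sub_const k
  have hpow : HasDerivAt (fun τ : ℝ => ((Real.log τ / 2) ^ (-β) - k) ^ e)
      ((σ⁻¹ / 2 * (-β) * (Real.log σ / 2) ^ (-β - 1)) * e
        * ((Real.log σ / 2) ^ (-β) - k) ^ (e - 1)) σ := hsub.rpow_const (Or.inl hA)
  have := hpow.const_mul c
  exact this.congr_deriv (by ring)

lemma hasDerivAt_g' (c k β e σ : ℝ) (hσ : 0 < σ) (hlog : 0 < Real.log σ)
    (hA : (Real.log σ / 2) ^ (-β) - k ≠ 0) :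
    HasDerivAt (fun τ : ℝ => c * e * (-β) / 2 * (τ⁻¹ * ((Real.log τ / 2) ^ (-β - 1)
        * ((Real.log τ / 2) ^ (-β) - k) ^ (e - 1))))
      (c * e * (-β) / 2 * (-(σ ^ 2)⁻¹ * ((Real.log σ / 2) ^ (-β - 1)
          * ((Real.log σ / 2) ^ (-β) - k) ^ (e - 1))
        + σ⁻¹ * ((σ⁻¹ / 2 * (-β - 1) * (Real.log σ / 2) ^ (-β - 1 - 1))
            * ((Real.log σ / 2) ^ (-β) - k) ^ (e - 1)
          + (Real.log σ / 2) ^ (-β - 1) * ((σ⁻¹ / 2 * (-β) * (Real.log σ / 2) ^ (-β - 1))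
            * (e - 1) * ((Real.log σ / 2) ^ (-β) - k) ^ (e - 1 - 1))))) σ := by
  have hlog' : HasDerivAt Real.log σ⁻¹ σ := Real.hasDerivAt_log hσ.ne'
  have hdiv : HasDerivAt (fun τ : ℝ => Real.log τ / 2) (σ⁻¹ / 2) σ := hlog'.div_const 2
  have hh : (0:ℝ) < Real.log σ / 2 := by positivity
  have hh1 : HasDerivAt (fun τ : ℝ => (Real.log τ / 2) ^ (-β - 1))
      (σ⁻¹ / 2 * (-β - 1) * (Real.log σ / 2) ^ (-β - 1 - 1)) σ :=
    hdiv.rpow_const (Or.inl hh.ne')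
  have hA1 : HasDerivAt (fun τ : ℝ => ((Real.log τ / 2) ^ (-β) - k) ^ (e - 1))
      ((σ⁻¹ / 2 * (-β) * (Real.log σ / 2) ^ (-β - 1)) * (e - 1)
        * ((Real.log σ / 2) ^ (-β) - k) ^ (e - 1 - 1)) σ :=
    ((hdiv.rpow_const (Or.inl hh.ne')).sub_const k).rpow_const (Or.inl hA)
  have hinv : HasDerivAt (fun τ : ℝ => τ⁻¹) (-(σ ^ 2)⁻¹) σ := hasDerivAt_inv hσ.ne'
  exact ((hinv.mul (hh1.mul hA1)).const_mul (c * e * (-β) / 2))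

set_option maxHeartbeats 2000000 in
/-- Subsolution barrier for the weighted Euclidean porous medium equation
(proof of Theorem 4.1 (i), lower bound): for a weight
`ρ(x) ≍ |x|^{-2} (log|x|)^{-ν}` with `ν > 1`, the function
`u̲(x,t) = C₁ (t+t₀)^{-1/(m-1)} [(log|x|)^{-(ν-1)} − γ₁ (log(t+t₀))^{-(ν-1)}]₊^{1/(m-1)}`
satisfies `ρ ∂_t u̲ ≤ Δ(u̲^m)` in the region `|x| > R₀`, `t > 0` where its bracket is
positive, for suitable constants `C₁, γ₁ > 0`, `R₀ > 2`, `t₀ > e`. -/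
theorem stmt_16 (n : ℕ) (hn : 3 ≤ n) (m ν K₁ K₂ : ℝ)
    (hm : 1 < m) (hν : 1 < ν) (hK₁ : 0 < K₁) (hK₂ : 0 < K₂) (hK : K₁ ≤ K₂)
    (ρ : EuclideanSpace ℝ (Fin n) → ℝ) (hρmeas : Measurable ρ) (hρpos : ∀ x, 0 < ρ x)
    (hρlow : ∀ x, 2 ≤ ‖x‖ → K₁ / (‖x‖ ^ 2 * (Real.log ‖x‖) ^ ν) ≤ ρ x)
    (hρup : ∀ x, 2 ≤ ‖x‖ → ρ x ≤ K₂ / (‖x‖ ^ 2 * (Real.log ‖x‖) ^ ν)) :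
    ∃ C₁ > (0:ℝ), ∃ γ₁ > (0:ℝ), ∃ R₀ > (2:ℝ), ∃ t₀ > Real.exp 1,
      ∀ U : EuclideanSpace ℝ (Fin n) → ℝ → ℝ,
        (U = fun x t => C₁ * (t + t₀) ^ (-1 / (m - 1)) *
          (max ((Real.log ‖x‖) ^ (-(ν - 1))
            - γ₁ * (Real.log (t + t₀)) ^ (-(ν - 1))) 0) ^ (1 / (m - 1))) →
        ∀ x : EuclideanSpace ℝ (Fin n), R₀ < ‖x‖ → ∀ t : ℝ, 0 < t →
          γ₁ * (Real.log (t + t₀)) ^ (-(ν - 1)) < (Real.log ‖x‖) ^ (-(ν - 1)) →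
          ρ x * deriv (fun τ : ℝ => U x τ) t
            ≤ euclideanLaplacian n (fun y => U y t ^ m) x := by
  have hm1 : (0:ℝ) < m - 1 := by linarith
  simp only [neg_div]
  set p : ℝ := 1 / (m - 1) with hpdef
  have hp : 0 < p := by positivity
  set β : ℝ := ν - 1 with hβdef
  have hβ : 0 < β := by simp only [hβdef]; linarith
  have hn2 : (1:ℝ) ≤ (n:ℝ) - 2 := by
    have : (3:ℝ) ≤ (n:ℝ) := by exact_mod_cast hn
    linarith
  set E : ℝ := K₁ / ((n:ℝ) - 2) with hEdef
  have hE : 0 < E := by apply div_pos hK₁; linarith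
  have hEn : E * ((n:ℝ) - 2) = K₁ := by
    rw [hEdef]; field_simp
  set C₁ : ℝ := (E * p / ((p + 1) * β)) ^ p with hC₁def
  have hCbase : 0 < E * p / ((p + 1) * β) := by positivity
  have hC₁ : 0 < C₁ := Real.rpow_pos_of_pos hCbase p
  have hC₁m : C₁ ^ (m - 1) = E * p / ((p + 1) * β) := by
    rw [hC₁def, ← Real.rpow_mul hCbase.le,
      show p * (m - 1) = 1 by rw [hpdef]; field_simp, Real.rpow_one]
  set γ₁ : ℝ := max 1 ((K₂ / (E * p)) ^ β) with hγdef
  have hγ1 : (1:ℝ) ≤ γ₁ := le_max_left _ _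
  have hγ : 0 < γ₁ := lt_of_lt_of_le one_pos hγ1
  have hγkey : K₂ ≤ E * p * γ₁ ^ (1 / β) := by
    have h1 : ((K₂ / (E * p)) ^ β) ^ (1 / β) = K₂ / (E * p) := by
      rw [← Real.rpow_mul (by positivity),
        show β * (1 / β) = 1 by field_simp, Real.rpow_one]
    have h2 : K₂ / (E * p) ≤ γ₁ ^ (1 / β) := by
      rw [← h1]
      exact Real.rpow_le_rpow (by positivity) (le_max_right _ _) (by positivity)
    calc K₂ = E * p * (K₂ / (E * p)) := by field_simp
      _ ≤ E * p * γ₁ ^ (1 / β) := by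
          exact mul_le_mul_of_nonneg_left h2 (by positivity)
  refine ⟨C₁, hC₁, γ₁, hγ, 3, by norm_num, Real.exp 2, Real.exp_lt_exp.mpr one_lt_two, ?_⟩
  intro U hU x hx t ht hregion
  have hr0 : (0:ℝ) < ‖x‖ := by linarith
  have hs : 0 < Real.log ‖x‖ := Real.log_pos (by linarith)
  have hexp2 : (1:ℝ) < Real.exp 2 := by
    calc (1:ℝ) = Real.exp 0 := (Real.exp_zero).symm
      _ < Real.exp 2 := Real.exp_lt_exp.mpr (by norm_num)
  have hT : 0 < t + Real.exp 2 := by positivity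
  have hL : 0 < Real.log (t + Real.exp 2) := Real.log_pos (by linarith)
  set L : ℝ := Real.log (t + Real.exp 2) with hLdef
  set s : ℝ := Real.log ‖x‖ with hsdef
  set k : ℝ := γ₁ * L ^ (-β) with hkdef
  have hB : 0 < s ^ (-β) - k := sub_pos.mpr hregion
  -- time derivative
  have hderiv : deriv (fun τ : ℝ => U x τ) t
      = C₁ * p * (t + Real.exp 2) ^ (-p - 1) * (s ^ (-β) - k) ^ (p - 1) *
        (γ₁ * β * L ^ (-β - 1) - (s ^ (-β) - k)) := by
    simp only [hU]
    exact deriv_time C₁ γ₁ β p (Real.exp 2) (s ^ (-β)) t hT hL hB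
  -- spatial part
  have hx2 : (1:ℝ) < ‖x‖ ^ 2 := by nlinarith
  have hσ0 : (0:ℝ) < ‖x‖ ^ 2 := by positivity
  have hlogsq : Real.log (‖x‖ ^ 2) / 2 = s := by
    rw [Real.log_pow]; push_cast; rw [hsdef]; ring
  have hA0 : (Real.log (‖x‖ ^ 2) / 2) ^ (-β) - k ≠ 0 := by
    rw [hlogsq]; exact hB.ne'
  have hnormcont : ContinuousAt (fun y : EuclideanSpace ℝ (Fin n) => ‖y‖) x :=
    continuous_norm.continuousAt
  have hev1 : ∀ᶠ y in nhds x, 1 < ‖y‖ :=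
    hnormcont.eventually (eventually_gt_nhds (by linarith : (1:ℝ) < ‖x‖))
  have hcb : ContinuousAt (fun y : EuclideanSpace ℝ (Fin n) => (Real.log ‖y‖) ^ (-β) - k) x := by
    apply ContinuousAt.sub _ continuousAt_const
    exact ((Real.continuousAt_log hr0.ne').comp hnormcont).rpow_const (Or.inl hs.ne')
  have hev2 : ∀ᶠ y in nhds x, 0 < (Real.log ‖y‖) ^ (-β) - k :=
    hcb.eventually (eventually_gt_nhds hB)
  have hφ : (fun y : EuclideanSpace ℝ (Fin n) => U y t ^ m) =ᶠ[nhds x]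
      (fun y : EuclideanSpace ℝ (Fin n) => (C₁ ^ m * (t + Real.exp 2) ^ (-p - 1)) *
        ((Real.log (‖y‖ ^ 2) / 2) ^ (-β) - k) ^ (p + 1)) := by
    filter_upwards [hev1, hev2] with y hy1 hy2
    simp only [hU]
    rw [max_eq_left hy2.le]
    have hylog2 : Real.log (‖y‖ ^ 2) / 2 = Real.log ‖y‖ := by
      rw [Real.log_pow]; push_cast; ring
    rw [hylog2]
    rw [Real.mul_rpow (by positivity) (Real.rpow_nonneg hy2.le p),
      Real.mul_rpow hC₁.le (Real.rpow_nonneg hT.le _),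
      ← Real.rpow_mul hT.le, ← Real.rpow_mul hy2.le]
    rw [show -p * m = -p - 1 by rw [hpdef]; field_simp; ring]
    rw [show p * m = p + 1 by rw [hpdef]; field_simp; ring]
  have hev3 : ∀ᶠ σ in nhds (‖x‖ ^ 2), (1:ℝ) < σ := eventually_gt_nhds hx2
  have hcA : ContinuousAt (fun σ : ℝ => (Real.log σ / 2) ^ (-β) - k) (‖x‖ ^ 2) := by
    apply ContinuousAt.sub _ continuousAt_const
    exact (Real.continuousAt_rpow_const _ _ (Or.inl (by rw [hlogsq]; exact hs.ne'))).comp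
      ((Real.continuousAt_log hσ0.ne').div_const 2)
  have hev4 : ∀ᶠ σ in nhds (‖x‖ ^ 2), 0 < (Real.log σ / 2) ^ (-β) - k := by
    have h0 : 0 < (Real.log (‖x‖ ^ 2) / 2) ^ (-β) - k := by rw [hlogsq]; exact hB
    exact hcA.eventually (eventually_gt_nhds h0)
  have hg : ∀ᶠ σ in nhds (‖x‖ ^ 2),
      HasDerivAt (fun τ : ℝ => (C₁ ^ m * (t + Real.exp 2) ^ (-p - 1)) *
          ((Real.log τ / 2) ^ (-β) - k) ^ (p + 1))
        ((C₁ ^ m * (t + Real.exp 2) ^ (-p - 1)) * (p + 1) * (-β) / 2 *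
          (σ⁻¹ * ((Real.log σ / 2) ^ (-β - 1)
            * ((Real.log σ / 2) ^ (-β) - k) ^ (p + 1 - 1)))) σ := by
    filter_upwards [hev3, hev4] with σ h1 h2
    exact hasDerivAt_g _ k β (p + 1) σ (by linarith) (Real.log_pos h1) h2.ne'
  have hg' := hasDerivAt_g' (C₁ ^ m * (t + Real.exp 2) ^ (-p - 1)) k β (p + 1) (‖x‖ ^ 2)
    hσ0 (Real.log_pos hx2) hA0
  have hLap := laplacian_radial n x (fun y => U y t ^ m)
    (fun σ : ℝ => (C₁ ^ m * (t + Real.exp 2) ^ (-p - 1)) *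
      ((Real.log σ / 2) ^ (-β) - k) ^ (p + 1))
    (fun σ : ℝ => (C₁ ^ m * (t + Real.exp 2) ^ (-p - 1)) * (p + 1) * (-β) / 2 *
      (σ⁻¹ * ((Real.log σ / 2) ^ (-β - 1)
        * ((Real.log σ / 2) ^ (-β) - k) ^ (p + 1 - 1)))) _ hφ hg hg'
  rw [hderiv, hLap]
  beta_reduce
  rw [hlogsq, show p + 1 - 1 = p by ring]
  -- algebraic / inequality endgame
  have hD : (s ^ (-β) - k) ^ p = (s ^ (-β) - k) ^ (p - 1) * (s ^ (-β) - k) := by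
    conv_lhs => rw [show p = p - 1 + 1 by ring]
    rw [Real.rpow_add hB, Real.rpow_one]
  have hCm : C₁ ^ m = E * p / ((p + 1) * β) * C₁ := by
    conv_lhs => rw [show m = m - 1 + 1 by ring]
    rw [Real.rpow_add hC₁, Real.rpow_one, hC₁m]
  have hsν : s ^ (-β - 1) = (s ^ ν)⁻¹ := by
    rw [show -β - 1 = -ν by rw [hβdef]; ring, Real.rpow_neg hs.le]
  have key : K₂ * γ₁ * L ^ (-β - 1) ≤ E * p * s ^ (-β - 1) := by
    rw [show -β - 1 = -ν by rw [hβdef]; ring]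
    have e1 : (γ₁ * L ^ (-β)) ^ (ν / β) = γ₁ ^ (ν / β) * L ^ (-ν) := by
      rw [Real.mul_rpow hγ.le (Real.rpow_nonneg hL.le _), ← Real.rpow_mul hL.le,
        show -β * (ν / β) = -ν by field_simp]
    have e2 : (s ^ (-β)) ^ (ν / β) = s ^ (-ν) := by
      rw [← Real.rpow_mul hs.le, show -β * (ν / β) = -ν by field_simp]
    have e3 : γ₁ ^ (ν / β) * L ^ (-ν) ≤ s ^ (-ν) := by
      rw [← e1, ← e2]
      exact Real.rpow_le_rpow (by positivity) hregion.le (by positivity)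
    have e5 : γ₁ ^ (ν / β) = γ₁ ^ (1 / β) * γ₁ := by
      rw [show ν / β = 1 / β + 1 by rw [hβdef]; field_simp [show ν - 1 ≠ 0 by linarith]; ring, Real.rpow_add hγ, Real.rpow_one]
    have e4 : K₂ * γ₁ ≤ E * p * γ₁ ^ (ν / β) := by
      calc K₂ * γ₁ ≤ E * p * γ₁ ^ (1 / β) * γ₁ := mul_le_mul_of_nonneg_right hγkey hγ.le
        _ = E * p * γ₁ ^ (ν / β) := by rw [e5]; ring
    calc K₂ * γ₁ * L ^ (-ν) ≤ E * p * γ₁ ^ (ν / β) * L ^ (-ν) :=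
          mul_le_mul_of_nonneg_right e4 (Real.rpow_nonneg hL.le _)
      _ = E * p * (γ₁ ^ (ν / β) * L ^ (-ν)) := by ring
      _ ≤ E * p * s ^ (-ν) := mul_le_mul_of_nonneg_left e3 (by positivity)
  have hρu := hρup x (by linarith)
  have hρl := hρlow x (by linarith)
  have conv1 : K₂ / (‖x‖ ^ 2 * s ^ ν) = K₂ * (‖x‖ ^ 2)⁻¹ * s ^ (-β - 1) := by
    rw [hsν, div_eq_mul_inv, mul_inv]; ring
  have conv2 : K₁ / (‖x‖ ^ 2 * s ^ ν) = K₁ * (‖x‖ ^ 2)⁻¹ * s ^ (-β - 1) := by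
    rw [hsν, div_eq_mul_inv, mul_inv]; ring
  rw [conv1] at hρu
  rw [conv2] at hρl
  have hQ0 : 0 ≤ γ₁ * β * L ^ (-β - 1) :=
    mul_nonneg (mul_nonneg hγ.le hβ.le) (Real.rpow_nonneg hL.le _)
  have hP20 : 0 ≤ s ^ (-β - 1) := Real.rpow_nonneg hs.le _
  have hP30 : 0 ≤ s ^ (-β - 1 - 1) := Real.rpow_nonneg hs.le _
  have hι0 : 0 ≤ (‖x‖ ^ 2)⁻¹ := by positivity
  have hmain : ρ x * (γ₁ * β * L ^ (-β - 1) - (s ^ (-β) - k))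
      ≤ E * (‖x‖ ^ 2)⁻¹ * (β * p * (s ^ (-β - 1) * s ^ (-β - 1))
        + (β + 1) * (s ^ (-β) - k) * s ^ (-β - 1 - 1)
        - ((n:ℝ) - 2) * (s ^ (-β) - k) * s ^ (-β - 1)) := by
    have h_up : ρ x * (γ₁ * β * L ^ (-β - 1))
        ≤ (K₂ * (‖x‖ ^ 2)⁻¹ * s ^ (-β - 1)) * (γ₁ * β * L ^ (-β - 1)) :=
      mul_le_mul_of_nonneg_right hρu hQ0
    have h_low : (K₁ * (‖x‖ ^ 2)⁻¹ * s ^ (-β - 1)) * (s ^ (-β) - k)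
        ≤ ρ x * (s ^ (-β) - k) :=
      mul_le_mul_of_nonneg_right hρl hB.le
    have h_key : (K₂ * (‖x‖ ^ 2)⁻¹ * s ^ (-β - 1)) * (γ₁ * β * L ^ (-β - 1))
        ≤ E * (‖x‖ ^ 2)⁻¹ * (β * p * (s ^ (-β - 1) * s ^ (-β - 1))) := by
      calc (K₂ * (‖x‖ ^ 2)⁻¹ * s ^ (-β - 1)) * (γ₁ * β * L ^ (-β - 1))
          = ((‖x‖ ^ 2)⁻¹ * β * s ^ (-β - 1)) * (K₂ * γ₁ * L ^ (-β - 1)) := by ring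
        _ ≤ ((‖x‖ ^ 2)⁻¹ * β * s ^ (-β - 1)) * (E * p * s ^ (-β - 1)) := by
            apply mul_le_mul_of_nonneg_left key
            exact mul_nonneg (mul_nonneg hι0 hβ.le) hP20
        _ = E * (‖x‖ ^ 2)⁻¹ * (β * p * (s ^ (-β - 1) * s ^ (-β - 1))) := by ring
    have hpos : 0 ≤ E * (‖x‖ ^ 2)⁻¹ * ((β + 1) * (s ^ (-β) - k) * s ^ (-β - 1 - 1)) :=
      mul_nonneg (mul_nonneg hE.le hι0)
        (mul_nonneg (mul_nonneg (by linarith) hB.le) hP30)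
    have hEnK : K₁ * (‖x‖ ^ 2)⁻¹ * s ^ (-β - 1) * (s ^ (-β) - k)
        = E * (‖x‖ ^ 2)⁻¹ * (((n:ℝ) - 2) * (s ^ (-β) - k) * s ^ (-β - 1)) := by
      rw [← hEn]; ring
    linarith [h_up, h_low, h_key, hpos, hEnK]
  have hp1 : p + 1 ≠ 0 := by positivity
  clear_value p β E C₁ γ₁ L s k
  have hX : 0 < C₁ * p * (t + Real.exp 2) ^ (-p - 1) * (s ^ (-β) - k) ^ (p - 1) := by
    have := Real.rpow_pos_of_pos hT (-p - 1)
    have := Real.rpow_pos_of_pos hB (p - 1)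
    positivity
  calc ρ x * (C₁ * p * (t + Real.exp 2) ^ (-p - 1) * (s ^ (-β) - k) ^ (p - 1) *
        (γ₁ * β * L ^ (-β - 1) - (s ^ (-β) - k)))
      = (C₁ * p * (t + Real.exp 2) ^ (-p - 1) * (s ^ (-β) - k) ^ (p - 1)) *
        (ρ x * (γ₁ * β * L ^ (-β - 1) - (s ^ (-β) - k))) := by ring
    _ ≤ (C₁ * p * (t + Real.exp 2) ^ (-p - 1) * (s ^ (-β) - k) ^ (p - 1)) *
        (E * (‖x‖ ^ 2)⁻¹ * (β * p * (s ^ (-β - 1) * s ^ (-β - 1))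
          + (β + 1) * (s ^ (-β) - k) * s ^ (-β - 1 - 1)
          - ((n:ℝ) - 2) * (s ^ (-β) - k) * s ^ (-β - 1))) :=
        mul_le_mul_of_nonneg_left hmain hX.le
    _ = _ := by
        rw [hCm, hD]
        have hne : (‖x‖ ^ 2 : ℝ) ≠ 0 := hσ0.ne'
        field_simp [hne, hβ.ne', hp.ne', hp1]
        ring
end

section
/- Let n ≥ 3 be an integer and let m > 1, ν > 1, K₂ > 0. Let ρ : ℝⁿ → (0,∞) be a measurable function satisfying ρ(x) ≤ K₂·|x|^{−2}·(log|x|)^{−ν} for all |x| ≥ 2. Then for every C > 0 with C^{m−1} > K₂/(m·(ν−1)·(n−2)) there exists R > 2 such that the function W(x) := C·(log|x|)^{−(ν−1)/(m−1)} satisfies Δ(W^m)(x) + ρ(x)·W(x)/(m−1) ≤ 0 for all x with |x| > R. -/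
open Real Filter Set MeasureTheory

private lemma aux_hasDerivAt_pow (A p : ℝ) {t : ℝ} (ht : 1 < t) :
    HasDerivAt (fun t => A * ((1/2) * Real.log t) ^ p)
      (A * p * ((1/2) * Real.log t) ^ (p - 1) * (2 * t)⁻¹) t := by
  have h0 : (0:ℝ) < t := lt_trans one_pos ht
  have hs : 0 < (1/2) * Real.log t := by
    have := Real.log_pos ht; linarith
  have h1 : HasDerivAt (fun t => (1/2) * Real.log t) ((1/2) * t⁻¹) t :=
    (Real.hasDerivAt_log h0.ne').const_mul _
  have h2 := (h1.rpow_const (p := p) (Or.inl hs.ne')).const_mul A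
  refine h2.congr_deriv ?_
  ring

private lemma aux_hasDerivAt_k1 (A p : ℝ) {t : ℝ} (ht : 1 < t) :
    HasDerivAt (fun t => A * p * ((1/2) * Real.log t) ^ (p - 1) * (2 * t)⁻¹)
      ((A * p * (p - 1) * ((1/2) * Real.log t) ^ (p - 2)
        - 2 * A * p * ((1/2) * Real.log t) ^ (p - 1)) * ((2 * t) * (2 * t))⁻¹) t := by
  have h0 : (0:ℝ) < t := lt_trans one_pos ht
  have hf := aux_hasDerivAt_pow (A * p) (p - 1) ht
  have hg : HasDerivAt (fun t : ℝ => (2 * t)⁻¹) (-2 / (2 * t) ^ 2) t := by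
    have h2t : HasDerivAt (fun t : ℝ => 2 * t) 2 t := by
      simpa using (hasDerivAt_id t).const_mul 2
    exact h2t.inv (by positivity)
  have h := hf.mul hg
  simp only [show p - 1 - 1 = p - 2 from by ring] at h
  refine h.congr_deriv ?_
  have h2t : (2 * t) ≠ 0 := by positivity
  ring

set_option maxHeartbeats 1000000 in
/-- Supersolution of the weighted sublinear elliptic equation in `ℝⁿ` (behind the sharp
upper asymptotics (4.6) of Theorem 4.1 (ii)): for a weight bounded above by
`K₂ |x|^{-2}(log|x|)^{-ν}`, every `C` with `C^{m-1} > K₂/(m(ν-1)(n-2))` makes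
`W(x) = C (log|x|)^{-(ν-1)/(m-1)}` satisfy `Δ(W^m) + ρ W/(m-1) ≤ 0` outside a large ball. -/
theorem stmt_17 (n : ℕ) (hn : 3 ≤ n) (m ν K₂ : ℝ)
    (hm : 1 < m) (hν : 1 < ν) (hK₂ : 0 < K₂)
    (ρ : EuclideanSpace ℝ (Fin n) → ℝ) (hρmeas : Measurable ρ) (hρpos : ∀ x, 0 < ρ x)
    (hρup : ∀ x, 2 ≤ ‖x‖ → ρ x ≤ K₂ / (‖x‖ ^ 2 * (Real.log ‖x‖) ^ ν)) :
    ∀ C : ℝ, 0 < C → K₂ / (m * (ν - 1) * ((n:ℝ) - 2)) < C ^ (m - 1) →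
      ∃ R > (2:ℝ), ∀ x : EuclideanSpace ℝ (Fin n), R < ‖x‖ →
        euclideanLaplacian n
            (fun y => (C * (Real.log ‖y‖) ^ (-(ν - 1) / (m - 1))) ^ m) x
          + ρ x * (C * (Real.log ‖x‖) ^ (-(ν - 1) / (m - 1))) / (m - 1) ≤ 0 := by
  intro C hC hCgt
  have hm1 : (0:ℝ) < m - 1 := by linarith
  have hν1 : (0:ℝ) < ν - 1 := by linarith
  have hn2 : (1:ℝ) ≤ (n:ℝ) - 2 := by
    have : (3:ℝ) ≤ (n:ℝ) := by exact_mod_cast hn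
    linarith
  set b : ℝ := -(ν - 1) / (m - 1) with hb_def
  set α : ℝ := b * m with hα_def
  set A : ℝ := C ^ m with hA_def
  have hA : 0 < A := Real.rpow_pos_of_pos hC m
  have hb : b < 0 := div_neg_of_neg_of_pos (by linarith) hm1
  have hα : α < 0 := mul_neg_of_neg_of_pos hb (by linarith)
  have hAα : A * α < 0 := mul_neg_of_pos_of_neg hA hα
  set P : ℝ := A * α * (α - 1) with hP_def
  have hP : 0 < P := mul_pos_of_neg_of_neg hAα (by linarith)
  set δ : ℝ := -(((n:ℝ) - 2) * (A * α) + K₂ * C / (m - 1)) with hδ_def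
  have hδ : 0 < δ := by
    have hden : 0 < m * (ν - 1) * ((n:ℝ) - 2) :=
      mul_pos (mul_pos (by linarith) hν1) (by linarith)
    have h1 : K₂ < C ^ (m - 1) * (m * (ν - 1) * ((n:ℝ) - 2)) := (div_lt_iff₀ hden).mp hCgt
    have h2 : C ^ m = C ^ (m - 1) * C := by
      rw [← Real.rpow_add_one hC.ne' (m - 1)]
      norm_num
    have h3 : K₂ * C < C ^ m * (m * (ν - 1) * ((n:ℝ) - 2)) := by
      have := mul_lt_mul_of_pos_right h1 hC
      rw [h2]; nlinarith
    have h4 : δ = (C ^ m * (m * (ν - 1) * ((n:ℝ) - 2)) - K₂ * C) / (m - 1) := by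
      rw [hδ_def, hα_def, hb_def, hA_def]
      field_simp
      ring
    rw [h4]
    exact div_pos (by linarith) hm1
  refine ⟨max 3 (Real.exp (P / δ + 1)), lt_of_lt_of_le (by norm_num) (le_max_left _ _), ?_⟩
  intro x hx
  have hx3 : (3:ℝ) < ‖x‖ := lt_of_le_of_lt (le_max_left _ _) hx
  have hx2 : (2:ℝ) ≤ ‖x‖ := by linarith
  have hx1 : (1:ℝ) < ‖x‖ := by linarith
  have hnx : (0:ℝ) < ‖x‖ := by linarith
  set L : ℝ := Real.log ‖x‖ with hL_def
  have hL0 : 0 < L := Real.log_pos hx1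
  have hLbig : P / δ + 1 < L := by
    rw [hL_def]
    have := lt_of_le_of_lt (le_max_right 3 (Real.exp (P / δ + 1))) hx
    exact (Real.lt_log_iff_exp_lt hnx).mpr this
  have hL1 : P / δ < L := by
    have : 0 < P / δ := div_pos hP hδ
    linarith
  set t : ℝ := ‖x‖ ^ 2 with ht_def
  have ht1 : 1 < t := by rw [ht_def]; nlinarith
  have ht0 : 0 < t := by linarith
  have hhalf : (1/2 : ℝ) * Real.log t = L := by
    rw [ht_def, Real.log_pow, hL_def]
    push_cast
    ring
  -- The open set where everything is smooth
  set U : Set (EuclideanSpace ℝ (Fin n)) := {y | 1 < ‖y‖} with hU_def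
  have hU : IsOpen U := isOpen_lt continuous_const continuous_norm
  have hxU : x ∈ U := hx1
  set F : EuclideanSpace ℝ (Fin n) → ℝ := fun y => (C * (Real.log ‖y‖) ^ b) ^ m with hF_def
  set φ : EuclideanSpace ℝ (Fin n) → ℝ :=
    fun y => A * ((1/2) * Real.log (‖y‖ ^ 2)) ^ α with hφ_def
  have heq : Set.EqOn F φ U := by
    intro y hy
    have hy1 : (1:ℝ) < ‖y‖ := hy
    have hLy : 0 < Real.log ‖y‖ := Real.log_pos hy1
    have hh : (1/2 : ℝ) * Real.log (‖y‖ ^ 2) = Real.log ‖y‖ := by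
      rw [Real.log_pow]; push_cast; ring
    simp only [hF_def, hφ_def, hh]
    rw [Real.mul_rpow hC.le (Real.rpow_nonneg hLy.le _), ← Real.rpow_mul hLy.le, hA_def,
      hα_def]
  have key : ∀ y ∈ U,
      HasFDerivAt φ
        ((A * α * ((1/2) * Real.log (‖y‖ ^ 2)) ^ (α - 1) * (2 * ‖y‖ ^ 2)⁻¹) •
          (2 • innerSL ℝ y)) y := by
    intro y hy
    have hy1 : (1:ℝ) < ‖y‖ := hy
    have hty : (1:ℝ) < ‖y‖ ^ 2 := by nlinarith
    have hk := aux_hasDerivAt_pow A α hty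
    have hq : HasFDerivAt (fun y : EuclideanSpace ℝ (Fin n) => ‖y‖ ^ 2)
        (2 • innerSL ℝ y) y := (hasStrictFDerivAt_norm_sq y).hasFDerivAt
    have hcomp := hk.comp_hasFDerivAt y hq
    exact hcomp
  have hfd : ∀ y ∈ U, ∀ i : Fin n,
      fderiv ℝ F y (EuclideanSpace.single i 1)
        = (A * α * ((1/2) * Real.log (‖y‖ ^ 2)) ^ (α - 1) * (2 * ‖y‖ ^ 2)⁻¹) * (2 * y i) := by
    intro y hy i
    have hFφ : F =ᶠ[nhds y] φ := Filter.eventuallyEq_of_mem (hU.mem_nhds hy) heq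
    rw [hFφ.fderiv_eq, (key y hy).fderiv]
    simp only [ContinuousLinearMap.smul_apply, smul_eq_mul, innerSL_apply_apply,
      EuclideanSpace.inner_single_right, conj_trivial, mul_one, one_mul]
    ring
  -- second derivatives
  have hmain : ∀ i : Fin n,
      fderiv ℝ (fun y => fderiv ℝ F y (EuclideanSpace.single i 1)) x
          (EuclideanSpace.single i 1)
        = 2 * (A * α * L ^ (α - 1) * (2 * t)⁻¹)
          + 4 * ((A * α * (α - 1) * L ^ (α - 2) - 2 * A * α * L ^ (α - 1))
              * ((2 * t) * (2 * t))⁻¹) * (x i) ^ 2 := by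
    intro i
    set ψ : EuclideanSpace ℝ (Fin n) → ℝ := fun y =>
      (A * α * ((1/2) * Real.log (‖y‖ ^ 2)) ^ (α - 1) * (2 * ‖y‖ ^ 2)⁻¹) * (2 * y i)
      with hψ_def
    have hψeq : (fun y => fderiv ℝ F y (EuclideanSpace.single i 1)) =ᶠ[nhds x] ψ :=
      Filter.eventuallyEq_of_mem (hU.mem_nhds hxU) (fun y hy => hfd y hy i)
    rw [hψeq.fderiv_eq]
    -- derivative of the first factor
    have hc : HasFDerivAt
        (fun y : EuclideanSpace ℝ (Fin n) =>
          A * α * ((1/2) * Real.log (‖y‖ ^ 2)) ^ (α - 1) * (2 * ‖y‖ ^ 2)⁻¹)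
        (((A * α * (α - 1) * ((1/2) * Real.log (‖x‖ ^ 2)) ^ (α - 2)
            - 2 * A * α * ((1/2) * Real.log (‖x‖ ^ 2)) ^ (α - 1))
            * ((2 * ‖x‖ ^ 2) * (2 * ‖x‖ ^ 2))⁻¹) • (2 • innerSL ℝ x)) x := by
      have htx : (1:ℝ) < ‖x‖ ^ 2 := by rw [← ht_def]; exact ht1
      have hk1 := aux_hasDerivAt_k1 A α htx
      have hq : HasFDerivAt (fun y : EuclideanSpace ℝ (Fin n) => ‖y‖ ^ 2)
          (2 • innerSL ℝ x) x := (hasStrictFDerivAt_norm_sq x).hasFDerivAt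
      exact hk1.comp_hasFDerivAt x hq
    have hdi : HasFDerivAt (fun y : EuclideanSpace ℝ (Fin n) => 2 * y i)
        ((2:ℝ) • innerSL ℝ (EuclideanSpace.single i (1:ℝ))) x := by
      have hlin := (innerSL ℝ (EuclideanSpace.single i (1:ℝ))).hasFDerivAt (x := x)
      have hfun : ⇑(innerSL ℝ (EuclideanSpace.single i (1:ℝ)))
          = fun y : EuclideanSpace ℝ (Fin n) => y i := by
        funext y
        simp [EuclideanSpace.inner_single_left]
      rw [hfun] at hlin
      exact hlin.const_mul 2
    have hprod := hc.mul hdi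
    have hψd : fderiv ℝ ψ x = _ := hprod.fderiv
    rw [hψd]
    have hsingle : (EuclideanSpace.single i (1:ℝ)) i = 1 := by
      simp
    simp only [ContinuousLinearMap.add_apply, ContinuousLinearMap.smul_apply, smul_eq_mul,
      innerSL_apply_apply, EuclideanSpace.inner_single_right, EuclideanSpace.inner_single_left,
      conj_trivial, mul_one, one_mul, hsingle]
    rw [← ht_def, hhalf]
    ring
  have hsum : ∑ i : Fin n, (x i) ^ 2 = t := by
    rw [ht_def, EuclideanSpace.norm_eq, Real.sq_sqrt (by positivity)]
    congr 1
    funext i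
    rw [Real.norm_eq_abs, sq_abs]
  have hLap : euclideanLaplacian n F x
      = 2 * (n:ℝ) * (A * α * L ^ (α - 1) * (2 * t)⁻¹)
        + 4 * ((A * α * (α - 1) * L ^ (α - 2) - 2 * A * α * L ^ (α - 1))
            * ((2 * t) * (2 * t))⁻¹) * t := by
    unfold euclideanLaplacian
    rw [Finset.sum_congr rfl (fun i _ => hmain i)]
    rw [Finset.sum_add_distrib, Finset.sum_const, Finset.card_univ, Fintype.card_fin]
    rw [← Finset.mul_sum, hsum]
    push_cast
    ring
  -- exponent identities
  have e1 : L ^ (α - 1) = L ^ (α - 2) * L := by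
    rw [show α - 1 = (α - 2) + 1 from by ring, Real.rpow_add_one hL0.ne']
  have e2 : L ^ b = L ^ (α - 1) * L ^ ν := by
    rw [← Real.rpow_add hL0]
    congr 1
    rw [hα_def, hb_def]
    field_simp
    ring
  have hLν : 0 < L ^ ν := Real.rpow_pos_of_pos hL0 ν
  have hLα2 : 0 ≤ L ^ (α - 2) := Real.rpow_nonneg hL0.le _
  -- bound the ρ term
  have h1 : ρ x ≤ K₂ / (t * L ^ ν) := by
    have := hρup x hx2
    rw [← ht_def, ← hL_def] at this
    exact this
  have hterm : ρ x * (C * L ^ b) / (m - 1) ≤ K₂ * C / (m - 1) * L ^ (α - 1) / t := by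
    have hpos : 0 ≤ C * L ^ b / (m - 1) := by positivity
    have h2 : ρ x * (C * L ^ b) / (m - 1) ≤ (K₂ / (t * L ^ ν)) * (C * L ^ b) / (m - 1) := by
      have := mul_le_mul_of_nonneg_right h1 hpos
      calc ρ x * (C * L ^ b) / (m - 1) = ρ x * (C * L ^ b / (m - 1)) := by ring
        _ ≤ (K₂ / (t * L ^ ν)) * (C * L ^ b / (m - 1)) := this
        _ = (K₂ / (t * L ^ ν)) * (C * L ^ b) / (m - 1) := by ring
    refine h2.trans_eq ?_
    rw [e2]
    field_simp
  -- final inequality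
  have hfin : 2 * (n:ℝ) * (A * α * L ^ (α - 1) * (2 * t)⁻¹)
        + 4 * ((A * α * (α - 1) * L ^ (α - 2) - 2 * A * α * L ^ (α - 1))
            * ((2 * t) * (2 * t))⁻¹) * t
        + K₂ * C / (m - 1) * L ^ (α - 1) / t ≤ 0 := by
    have hexp : 2 * (n:ℝ) * (A * α * L ^ (α - 1) * (2 * t)⁻¹)
          + 4 * ((A * α * (α - 1) * L ^ (α - 2) - 2 * A * α * L ^ (α - 1))
              * ((2 * t) * (2 * t))⁻¹) * t
          + K₂ * C / (m - 1) * L ^ (α - 1) / t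
        = (P - δ * L) * L ^ (α - 2) / t := by
      rw [e1, hP_def, hδ_def]
      field_simp
      ring
    rw [hexp]
    have h4 : P - δ * L ≤ 0 := by
      have h' : P < L * δ := (div_lt_iff₀ hδ).mp hL1
      nlinarith
    have h5 : (P - δ * L) * L ^ (α - 2) ≤ 0 := mul_nonpos_of_nonpos_of_nonneg h4 hLα2
    exact div_nonpos_of_nonpos_of_nonneg h5 ht0.le
  calc euclideanLaplacian n F x + ρ x * (C * L ^ b) / (m - 1)
      ≤ (2 * (n:ℝ) * (A * α * L ^ (α - 1) * (2 * t)⁻¹)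
          + 4 * ((A * α * (α - 1) * L ^ (α - 2) - 2 * A * α * L ^ (α - 1))
              * ((2 * t) * (2 * t))⁻¹) * t)
        + K₂ * C / (m - 1) * L ^ (α - 1) / t := by
        rw [hLap]
        linarith [hterm]
    _ ≤ 0 := by linarith [hfin]
end

section
/- Let n ≥ 3 be an integer and let m > 1, ν > 1, K₁ > 0. Let ρ : ℝⁿ → (0,∞) be a measurable function satisfying ρ(x) ≥ K₁·|x|^{−2}·(log|x|)^{−ν} for all |x| ≥ 2. Then for every C > 0 with C^{m−1} < K₁/(m·(ν−1)·(n−2)) there exists R > 2 (independent of δ) such that for every δ > 0 the function V(x) := C·[(log|x|)^{−(ν−1)} − δ]₊^{1/(m−1)} satisfies Δ(V^m)(x) + ρ(x)·V(x)/(m−1) ≥ 0 at every x with |x| > R and (log|x|)^{−(ν−1)} > δ. -/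
open Real Filter Set MeasureTheory Topology

/-! Auxiliary one-variable functions: with `s = ‖x‖²`, the radial profile of `V^m` is
`auxG m ν C δ s`, its derivative is `auxG1`, and the derivative of `auxG1` is `auxG2`. -/

noncomputable def auxW (ν δ s : ℝ) : ℝ := (Real.log s / 2) ^ (-(ν - 1)) - δ

noncomputable def auxG (m ν C δ s : ℝ) : ℝ := C ^ m * auxW ν δ s ^ (m / (m - 1))

noncomputable def auxG1 (m ν C δ s : ℝ) : ℝ :=
  -(C ^ m * (m / (m - 1)) * (ν - 1) / 2) *
    (auxW ν δ s ^ (m / (m - 1) - 1) * (Real.log s / 2) ^ (-ν) * s⁻¹)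

noncomputable def auxG2 (m ν C δ s : ℝ) : ℝ :=
  C ^ m * (m / (m - 1)) * (ν - 1) / 2 * s⁻¹ * s⁻¹ *
    ((m / (m - 1) - 1) * (ν - 1) * auxW ν δ s ^ (m / (m - 1) - 2) *
        ((Real.log s / 2) ^ (-ν) * (Real.log s / 2) ^ (-ν)) / 2
      + ν * auxW ν δ s ^ (m / (m - 1) - 1) * (Real.log s / 2) ^ (-ν - 1) / 2
      + auxW ν δ s ^ (m / (m - 1) - 1) * (Real.log s / 2) ^ (-ν))

lemma aux_dW {ν δ s : ℝ} (hs : 1 < s) :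
    HasDerivAt (fun t => auxW ν δ t)
      (s⁻¹ / 2 * (-(ν - 1)) * (Real.log s / 2) ^ (-(ν - 1) - 1)) s := by
  have hs0 : (0:ℝ) < s := lt_trans one_pos hs
  have hlog : 0 < Real.log s := Real.log_pos hs
  have hL : HasDerivAt (fun t => Real.log t / 2) (s⁻¹ / 2) s :=
    (Real.hasDerivAt_log (ne_of_gt hs0)).div_const 2
  have hLne : Real.log s / 2 ≠ 0 := by positivity
  exact (hL.rpow_const (Or.inl hLne)).sub_const δ

lemma aux_dG {m ν C δ s : ℝ} (hs : 1 < s) (hW : 0 < auxW ν δ s) :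
    HasDerivAt (fun t => auxG m ν C δ t) (auxG1 m ν C δ s) s := by
  have h := ((aux_dW (ν := ν) (δ := δ) hs).rpow_const
      (p := m / (m - 1)) (Or.inl (ne_of_gt hW))).const_mul (C ^ m)
  have hexp : -(ν - 1) - 1 = -ν := by ring
  rw [hexp] at h
  refine h.congr_deriv ?_
  simp only [auxG1]
  ring

lemma aux_dG1 {m ν C δ s : ℝ} (hs : 1 < s) (hW : 0 < auxW ν δ s) :
    HasDerivAt (fun t => auxG1 m ν C δ t) (auxG2 m ν C δ s) s := by
  have hs0 : (0:ℝ) < s := lt_trans one_pos hs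
  have hlog : 0 < Real.log s := Real.log_pos hs
  have hL : HasDerivAt (fun t => Real.log t / 2) (s⁻¹ / 2) s :=
    (Real.hasDerivAt_log (ne_of_gt hs0)).div_const 2
  have hLne : Real.log s / 2 ≠ 0 := by positivity
  have hA := (aux_dW (ν := ν) (δ := δ) hs).rpow_const
      (p := m / (m - 1) - 1) (Or.inl (ne_of_gt hW))
  have hB := hL.rpow_const (p := -ν) (Or.inl hLne)
  have hD := hasDerivAt_inv (ne_of_gt hs0)
  have h := ((hA.mul hB).mul hD).const_mul (-(C ^ m * (m / (m - 1)) * (ν - 1) / 2))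
  have hexp : -(ν - 1) - 1 = -ν := by ring
  have hexp2 : m / (m - 1) - 1 - 1 = m / (m - 1) - 2 := by ring
  rw [hexp, hexp2] at h
  refine h.congr_deriv ?_
  simp only [auxG2, Pi.mul_apply]
  ring

lemma aux_sum_eq (n : ℕ) (m ν C δ : ℝ) {s : ℝ} (hs : s ≠ 0) (hm : m - 1 ≠ 0) :
    2 * (n : ℝ) * auxG1 m ν C δ s + 4 * s * auxG2 m ν C δ s
      + (C ^ m * (m / (m - 1)) * (ν - 1) * ((n : ℝ) - 2)) *
          (auxW ν δ s ^ (m / (m - 1) - 1) * (Real.log s / 2) ^ (-ν)) * s⁻¹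
    = C ^ m * (m / (m - 1)) * (ν - 1) * s⁻¹ *
        ((m / (m - 1) - 1) * (ν - 1) * auxW ν δ s ^ (m / (m - 1) - 2) *
            ((Real.log s / 2) ^ (-ν) * (Real.log s / 2) ^ (-ν))
          + ν * auxW ν δ s ^ (m / (m - 1) - 1) * (Real.log s / 2) ^ (-ν - 1)) := by
  simp only [auxG1, auxG2]
  field_simp
  ring

/-! The squared norm on `EuclideanSpace` and its derivative. -/

noncomputable def ksq (n : ℕ) (y : EuclideanSpace ℝ (Fin n)) : ℝ := ∑ i, y i ^ 2

noncomputable def ksq' (n : ℕ) (y : EuclideanSpace ℝ (Fin n)) :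
    EuclideanSpace ℝ (Fin n) →L[ℝ] ℝ :=
  ∑ i, (2 * y i) • (EuclideanSpace.proj i : EuclideanSpace ℝ (Fin n) →L[ℝ] ℝ)

lemma ksq_norm (n : ℕ) (y : EuclideanSpace ℝ (Fin n)) : ksq n y = ‖y‖ ^ 2 := by
  rw [EuclideanSpace.norm_eq, Real.sq_sqrt (by positivity)]
  simp [ksq, sq_abs]

lemma hasFDerivAt_ksq (n : ℕ) (y : EuclideanSpace ℝ (Fin n)) :
    HasFDerivAt (ksq n) (ksq' n y) y := by
  have h : ∀ i : Fin n, HasFDerivAt (fun z : EuclideanSpace ℝ (Fin n) => z i ^ 2)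
      ((2 * y i) • (EuclideanSpace.proj i : EuclideanSpace ℝ (Fin n) →L[ℝ] ℝ)) y := by
    intro i
    have hp : HasFDerivAt (fun z : EuclideanSpace ℝ (Fin n) => z i)
        (EuclideanSpace.proj i : EuclideanSpace ℝ (Fin n) →L[ℝ] ℝ) y :=
      (EuclideanSpace.proj (𝕜 := ℝ) i).hasFDerivAt
    have h2 := hp.mul hp
    have hfun : (fun z : EuclideanSpace ℝ (Fin n) => z i ^ 2)
        = fun z => z i * z i := by funext z; ring
    rw [hfun, show ((2 * y i) • (EuclideanSpace.proj i : EuclideanSpace ℝ (Fin n) →L[ℝ] ℝ))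
      = y i • (EuclideanSpace.proj i : EuclideanSpace ℝ (Fin n) →L[ℝ] ℝ)
        + y i • (EuclideanSpace.proj i : EuclideanSpace ℝ (Fin n) →L[ℝ] ℝ) by
        rw [two_mul, add_smul]]
    exact h2
  exact HasFDerivAt.fun_sum fun i _ => h i

lemma ksq'_single (n : ℕ) (y : EuclideanSpace ℝ (Fin n)) (i : Fin n) :
    ksq' n y (EuclideanSpace.single i 1) = 2 * y i := by
  simp [ksq', ContinuousLinearMap.sum_apply, EuclideanSpace.single_apply, mul_ite,
    Finset.sum_ite_eq']

/-- Subsolution of the weighted sublinear elliptic equation in `ℝⁿ` (behind the sharp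
lower asymptotics (4.6) of Theorem 4.1 (ii)): for a weight bounded below by
`K₁ |x|^{-2}(log|x|)^{-ν}`, every `C` with `C^{m-1} < K₁/(m(ν-1)(n-2))` makes
`V(x) = C [(log|x|)^{-(ν-1)} − δ]₊^{1/(m-1)}` satisfy `Δ(V^m) + ρ V/(m-1) ≥ 0` on its
positivity set outside a large ball, with the radius independent of `δ`. -/
theorem stmt_18 (n : ℕ) (hn : 3 ≤ n) (m ν K₁ : ℝ)
    (hm : 1 < m) (hν : 1 < ν) (hK₁ : 0 < K₁)
    (ρ : EuclideanSpace ℝ (Fin n) → ℝ) (hρmeas : Measurable ρ) (hρpos : ∀ x, 0 < ρ x)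
    (hρlow : ∀ x, 2 ≤ ‖x‖ → K₁ / (‖x‖ ^ 2 * (Real.log ‖x‖) ^ ν) ≤ ρ x) :
    ∀ C : ℝ, 0 < C → C ^ (m - 1) < K₁ / (m * (ν - 1) * ((n:ℝ) - 2)) →
      ∃ R > (2:ℝ), ∀ δ > (0:ℝ), ∀ x : EuclideanSpace ℝ (Fin n), R < ‖x‖ →
        δ < (Real.log ‖x‖) ^ (-(ν - 1)) →
        0 ≤ euclideanLaplacian n
              (fun y => (C * (max ((Real.log ‖y‖) ^ (-(ν - 1)) - δ) 0)
                ^ (1 / (m - 1))) ^ m) x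
            + ρ x * (C * (max ((Real.log ‖x‖) ^ (-(ν - 1)) - δ) 0)
                ^ (1 / (m - 1))) / (m - 1) := by
  intro C hC hC2
  have hm1 : (0:ℝ) < m - 1 := by linarith
  have hn3 : (3:ℝ) ≤ (n:ℝ) := by exact_mod_cast hn
  refine ⟨3, by norm_num, ?_⟩
  intro δ hδ x hx hxδ
  set φ : EuclideanSpace ℝ (Fin n) → ℝ :=
    fun y => (C * (max ((Real.log ‖y‖) ^ (-(ν - 1)) - δ) 0) ^ (1 / (m - 1))) ^ m with hφdef
  set S : Set (EuclideanSpace ℝ (Fin n)) :=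
    {y | 3 < ‖y‖ ∧ δ < Real.log ‖y‖ ^ (-(ν - 1))} with hSdef
  have hxS : x ∈ S := ⟨hx, hxδ⟩
  have hSopen : IsOpen S := by
    rw [isOpen_iff_mem_nhds]
    intro y hy
    have hy3 : (3:ℝ) < ‖y‖ := hy.1
    have hn0 : ‖y‖ ≠ 0 := by intro h; rw [h] at hy3; norm_num at hy3
    have hlogne : Real.log ‖y‖ ≠ 0 := ne_of_gt (Real.log_pos (by linarith))
    have hc1 : ContinuousAt (fun z : EuclideanSpace ℝ (Fin n) =>
        Real.log ‖z‖ ^ (-(ν - 1))) y :=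
      ((continuous_norm.continuousAt).log hn0).rpow_const (Or.inl hlogne)
    have h1 : {z : EuclideanSpace ℝ (Fin n) | 3 < ‖z‖} ∈ 𝓝 y :=
      (isOpen_lt continuous_const continuous_norm).mem_nhds hy3
    have h2 : (fun z : EuclideanSpace ℝ (Fin n) => Real.log ‖z‖ ^ (-(ν - 1))) ⁻¹'
        (Set.Ioi δ) ∈ 𝓝 y := hc1.preimage_mem_nhds (Ioi_mem_nhds hy.2)
    filter_upwards [h1, h2] with z hz1 hz2
    exact ⟨hz1, hz2⟩
  -- pointwise facts on S
  have hyfacts : ∀ y ∈ S, 1 < ksq n y ∧ Real.log (ksq n y) / 2 = Real.log ‖y‖ ∧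
      0 < auxW ν δ (ksq n y) := by
    intro y hy
    have h3 : (3:ℝ) < ‖y‖ := hy.1
    have hks : ksq n y = ‖y‖ ^ 2 := ksq_norm n y
    have h1 : 1 < ksq n y := by rw [hks]; nlinarith
    have hlg : Real.log (ksq n y) / 2 = Real.log ‖y‖ := by
      rw [hks, Real.log_pow]; push_cast; ring
    refine ⟨h1, hlg, ?_⟩
    simp only [auxW]
    rw [hlg]
    have := hy.2
    linarith
  -- φ agrees with auxG ∘ ksq on S
  have hφG : ∀ y ∈ S, φ y = auxG m ν C δ (ksq n y) := by
    intro y hy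
    obtain ⟨h1, h2, h3⟩ := hyfacts y hy
    have hWval : auxW ν δ (ksq n y) = Real.log ‖y‖ ^ (-(ν - 1)) - δ := by
      simp only [auxW]; rw [h2]
    have hmax : max (Real.log ‖y‖ ^ (-(ν - 1)) - δ) 0 = auxW ν δ (ksq n y) := by
      rw [hWval]
      exact max_eq_left (by rw [← hWval]; exact h3.le)
    simp only [hφdef, auxG]
    rw [hmax, Real.mul_rpow hC.le (Real.rpow_nonneg h3.le _),
      ← Real.rpow_mul h3.le, show 1 / (m - 1) * m = m / (m - 1) by ring]
  -- first derivative of φ on S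
  have hDφ : ∀ y ∈ S, HasFDerivAt φ (auxG1 m ν C δ (ksq n y) • ksq' n y) y := by
    intro y hy
    obtain ⟨h1, h2, h3⟩ := hyfacts y hy
    have hg := (aux_dG (m := m) (C := C) h1 h3).comp_hasFDerivAt y (hasFDerivAt_ksq n y)
    refine hg.congr_of_eventuallyEq ?_
    filter_upwards [hSopen.mem_nhds hy] with z hz
    exact hφG z hz
  obtain ⟨h1, h2, h3⟩ := hyfacts x hxS
  -- second directional derivatives at x
  have hD2 : ∀ i : Fin n, fderiv ℝ (fun y => fderiv ℝ φ y (EuclideanSpace.single i 1)) x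
      (EuclideanSpace.single i 1)
      = 2 * auxG1 m ν C δ (ksq n x) + 4 * auxG2 m ν C δ (ksq n x) * x i ^ 2 := by
    intro i
    have hf : HasFDerivAt (fun y => auxG1 m ν C δ (ksq n y))
        (auxG2 m ν C δ (ksq n x) • ksq' n x) x :=
      (aux_dG1 h1 h3).comp_hasFDerivAt x (hasFDerivAt_ksq n x)
    have hp : HasFDerivAt (fun z : EuclideanSpace ℝ (Fin n) => z i)
        (EuclideanSpace.proj i : EuclideanSpace ℝ (Fin n) →L[ℝ] ℝ) x :=
      (EuclideanSpace.proj (𝕜 := ℝ) i).hasFDerivAt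
    have hgi : HasFDerivAt (fun y : EuclideanSpace ℝ (Fin n) => 2 * y i)
        ((2:ℝ) • (EuclideanSpace.proj i : EuclideanSpace ℝ (Fin n) →L[ℝ] ℝ)) x :=
      hp.const_mul 2
    have hmul := hf.mul hgi
    have heve : (fun y => fderiv ℝ φ y (EuclideanSpace.single i 1)) =ᶠ[𝓝 x]
        (fun y => auxG1 m ν C δ (ksq n y) * (2 * y i)) := by
      filter_upwards [hSopen.mem_nhds hxS] with z hz
      rw [(hDφ z hz).fderiv, ContinuousLinearMap.smul_apply, ksq'_single, smul_eq_mul]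
    have hfinal := hmul.congr_of_eventuallyEq heve
    rw [hfinal.fderiv]
    simp only [ContinuousLinearMap.add_apply, ContinuousLinearMap.smul_apply, ksq'_single,
      smul_eq_mul]
    have hone : (EuclideanSpace.proj i : EuclideanSpace ℝ (Fin n) →L[ℝ] ℝ)
        (EuclideanSpace.single i 1) = 1 := by
      simp [EuclideanSpace.single_apply]
    rw [hone]
    ring
  -- the Laplacian
  have hLap : euclideanLaplacian n φ x
      = 2 * (n:ℝ) * auxG1 m ν C δ (ksq n x) + 4 * (ksq n x) * auxG2 m ν C δ (ksq n x) := by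
    simp only [euclideanLaplacian]
    rw [Finset.sum_congr rfl fun i _ => hD2 i, Finset.sum_add_distrib, Finset.sum_const,
      Finset.card_univ, Fintype.card_fin, ← Finset.mul_sum]
    have hks : ∑ i : Fin n, x i ^ 2 = ksq n x := rfl
    rw [hks, nsmul_eq_mul]
    ring
  -- arithmetic: abbreviations
  have hs0 : (0:ℝ) < ksq n x := lt_trans one_pos h1
  have hlogx : 0 < Real.log ‖x‖ := Real.log_pos (by linarith)
  have hLpos : 0 < Real.log (ksq n x) / 2 := by rw [h2]; exact hlogx
  have ha : 0 < auxW ν δ (ksq n x) ^ (m / (m - 1) - 1) := Real.rpow_pos_of_pos h3 _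
  have hb : 0 < auxW ν δ (ksq n x) ^ (m / (m - 1) - 2) := Real.rpow_pos_of_pos h3 _
  have hc : 0 < (Real.log (ksq n x) / 2) ^ (-ν) := Real.rpow_pos_of_pos hLpos _
  have he : 0 < (Real.log (ksq n x) / 2) ^ (-ν - 1) := Real.rpow_pos_of_pos hLpos _
  have hCm : 0 < C ^ m := Real.rpow_pos_of_pos hC m
  have hq1 : 0 < m / (m - 1) - 1 := by
    rw [show m / (m - 1) - 1 = 1 / (m - 1) by field_simp; ring]
    positivity
  have hq0 : 0 < m / (m - 1) := div_pos (by linarith) hm1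
  -- key1 : lower bound for the Laplacian
  have hsum := aux_sum_eq n m ν C δ (ne_of_gt hs0) (ne_of_gt hm1)
  have hnonneg : 0 ≤ C ^ m * (m / (m - 1)) * (ν - 1) * (ksq n x)⁻¹ *
      ((m / (m - 1) - 1) * (ν - 1) * auxW ν δ (ksq n x) ^ (m / (m - 1) - 2) *
          ((Real.log (ksq n x) / 2) ^ (-ν) * (Real.log (ksq n x) / 2) ^ (-ν))
        + ν * auxW ν δ (ksq n x) ^ (m / (m - 1) - 1)
            * (Real.log (ksq n x) / 2) ^ (-ν - 1)) := by
    have hν0 : (0:ℝ) < ν := by linarith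
    have hν1 : (0:ℝ) < ν - 1 := by linarith
    have t1 : 0 ≤ (m / (m - 1) - 1) * (ν - 1) * auxW ν δ (ksq n x) ^ (m / (m - 1) - 2) *
        ((Real.log (ksq n x) / 2) ^ (-ν) * (Real.log (ksq n x) / 2) ^ (-ν)) :=
      mul_nonneg (mul_nonneg (mul_nonneg hq1.le hν1.le) hb.le) (mul_nonneg hc.le hc.le)
    have t2 : 0 ≤ ν * auxW ν δ (ksq n x) ^ (m / (m - 1) - 1)
        * (Real.log (ksq n x) / 2) ^ (-ν - 1) :=
      mul_nonneg (mul_nonneg hν0.le ha.le) he.le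
    have t3 : 0 ≤ C ^ m * (m / (m - 1)) * (ν - 1) * (ksq n x)⁻¹ :=
      mul_nonneg (mul_nonneg (mul_nonneg hCm.le hq0.le) hν1.le) (inv_nonneg.mpr hs0.le)
    exact mul_nonneg t3 (by linarith)
  have key1 : -(C ^ m * (m / (m - 1)) * (ν - 1) * ((n:ℝ) - 2)) *
      (auxW ν δ (ksq n x) ^ (m / (m - 1) - 1) * (Real.log (ksq n x) / 2) ^ (-ν))
        * (ksq n x)⁻¹
      ≤ 2 * (n:ℝ) * auxG1 m ν C δ (ksq n x) + 4 * (ksq n x) * auxG2 m ν C δ (ksq n x) := by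
    linarith [hsum, hnonneg]
  -- rewrite the potential term
  have hWval : auxW ν δ (ksq n x) = Real.log ‖x‖ ^ (-(ν - 1)) - δ := by
    simp only [auxW]; rw [h2]
  have hmax : max (Real.log ‖x‖ ^ (-(ν - 1)) - δ) 0 = auxW ν δ (ksq n x) := by
    rw [hWval]; exact max_eq_left (by rw [← hWval]; exact h3.le)
  have hexpV : (1:ℝ) / (m - 1) = m / (m - 1) - 1 := by field_simp; ring
  -- key2 : lower bound for the weight
  have key2 : K₁ / (ksq n x * Real.log ‖x‖ ^ ν) *
        (C * auxW ν δ (ksq n x) ^ (m / (m - 1) - 1)) / (m - 1)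
      ≤ ρ x * (C * auxW ν δ (ksq n x) ^ (m / (m - 1) - 1)) / (m - 1) := by
    have hρ := hρlow x (by linarith)
    rw [← ksq_norm n x] at hρ
    have hnum : 0 ≤ C * auxW ν δ (ksq n x) ^ (m / (m - 1) - 1) :=
      mul_nonneg hC.le ha.le
    have := mul_le_mul_of_nonneg_right hρ hnum
    exact (div_le_div_iff_of_pos_right hm1).mpr this
  -- key3 : the constant comparison
  have hceq : (Real.log (ksq n x) / 2) ^ (-ν) = (Real.log ‖x‖ ^ ν)⁻¹ := by
    rw [h2, Real.rpow_neg hlogx.le]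
  have hlgpos : 0 < Real.log ‖x‖ ^ ν := Real.rpow_pos_of_pos hlogx ν
  have hM : 0 < m * (ν - 1) * ((n:ℝ) - 2) :=
    mul_pos (mul_pos (by linarith) (by linarith)) (by linarith)
  have hKC : C ^ (m - 1) * (m * (ν - 1) * ((n:ℝ) - 2)) < K₁ := (lt_div_iff₀ hM).mp hC2
  have hCm_eq : C ^ m = C ^ (m - 1) * C := by
    have h' : C ^ (m - 1 + 1) = C ^ (m - 1) * C ^ (1:ℝ) := Real.rpow_add hC _ _
    rw [show m - 1 + 1 = m by ring, Real.rpow_one] at h'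
    exact h'
  have hbracket : 0 ≤ K₁ * C / (m - 1) - C ^ m * (m / (m - 1)) * (ν - 1) * ((n:ℝ) - 2) := by
    have h5 := mul_le_mul_of_nonneg_right hKC.le (le_of_lt (div_pos hC hm1))
    have heq : C ^ (m - 1) * (m * (ν - 1) * ((n:ℝ) - 2)) * (C / (m - 1))
        = C ^ m * (m / (m - 1)) * (ν - 1) * ((n:ℝ) - 2) := by rw [hCm_eq]; ring
    rw [heq] at h5
    have h6 : K₁ * (C / (m - 1)) = K₁ * C / (m - 1) := by ring
    linarith [h5, h6.ge]
  have key3 : 0 ≤ -(C ^ m * (m / (m - 1)) * (ν - 1) * ((n:ℝ) - 2)) *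
        (auxW ν δ (ksq n x) ^ (m / (m - 1) - 1) * (Real.log (ksq n x) / 2) ^ (-ν))
          * (ksq n x)⁻¹
      + K₁ / (ksq n x * Real.log ‖x‖ ^ ν) *
          (C * auxW ν δ (ksq n x) ^ (m / (m - 1) - 1)) / (m - 1) := by
    rw [hceq]
    have hid : -(C ^ m * (m / (m - 1)) * (ν - 1) * ((n:ℝ) - 2)) *
          (auxW ν δ (ksq n x) ^ (m / (m - 1) - 1) * (Real.log ‖x‖ ^ ν)⁻¹) * (ksq n x)⁻¹
        + K₁ / (ksq n x * Real.log ‖x‖ ^ ν) *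
            (C * auxW ν δ (ksq n x) ^ (m / (m - 1) - 1)) / (m - 1)
        = auxW ν δ (ksq n x) ^ (m / (m - 1) - 1) * (ksq n x)⁻¹ * (Real.log ‖x‖ ^ ν)⁻¹ *
            (K₁ * C / (m - 1) - C ^ m * (m / (m - 1)) * (ν - 1) * ((n:ℝ) - 2)) := by
      field_simp
      ring
    rw [hid]
    exact mul_nonneg (by positivity) hbracket
  -- conclusion
  rw [hLap, hmax, hexpV]
  linarith [key1, key2, key3]
end
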